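/- arXiv:2408.03933 — 3 statements merged into one kernel-verified Lean document; each statement's English description precedes it below -/
import Mathlib

section
/- For every i ∈ [k]: (i) for each r ∈ [N] the vertical canonical path Canonical(r; a_i–b_i) is a shortest (minimum-cost) a_i–b_i path in U_int, with cost exactly 5kN; and (ii) every shortest a_i–b_i path in U_int equals Canonical(ℓ; a_i–b_i) for some ℓ ∈ [N]. -/
/-- A directed path (self-avoiding walk) from `s` to `t` in the digraph with
edge relation `E`, given as the list of its vertices in order. -/
structure IsPathList {V : Type*} (E : V → V → Prop) (s t : V) (p : List V) : Prop where
  chain : p.Chain' E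
  nodup : p.Nodup
  head : p.head? = some s
  last : p.getLast? = some t

/-- A shortest directed `s⇝t` path, where the length of a path is its number of vertices. -/
def IsShortestDirPath {V : Type*} (E : V → V → Prop) (s t : V) (p : List V) : Prop :=
  IsPathList E s t p ∧ ∀ q : List V, IsPathList E s t q → p.length ≤ q.length

/-- Symmetrization of a relation: the adjacency of the undirected graph obtained by
forgetting the orientation of the edges. -/
def UAdj {V : Type*} (E : V → V → Prop) (x y : V) : Prop := E x y ∨ E y x

/-- The cost of a path: the sum of the costs of its vertices. -/
def pathCost {V : Type*} (cost : V → ℕ) (p : List V) : ℕ := (p.map cost).sum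

/-- A shortest (minimum-cost) `s`–`t` path in the undirected graph obtained from `E`. -/
def IsShortestCostPath {V : Type*} (E : V → V → Prop) (cost : V → ℕ) (s t : V)
    (p : List V) : Prop :=
  IsPathList (UAdj E) s t p ∧
    ∀ q : List V, IsPathList (UAdj E) s t q → pathCost cost p ≤ pathCost cost q

/-- The (directed) edges traversed by a path, as ordered pairs of consecutive vertices. -/
def dirEdges {V : Type*} (p : List V) : List (V × V) := p.zip p.tail

/-- Two directed paths are edge-disjoint. -/
def EdgeDisj {V : Type*} (p q : List V) : Prop := ∀ e ∈ dirEdges p, e ∉ dirEdges q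

/-- The (undirected) edges traversed by a path, as unordered pairs. -/
def uEdges {V : Type*} (p : List V) : List (Sym2 V) := (dirEdges p).map fun e => s(e.1, e.2)

/-- Two undirected paths are edge-disjoint. -/
def UEdgeDisj {V : Type*} (p q : List V) : Prop := ∀ e ∈ uEdges p, e ∉ uEdges q

/-- Two paths are vertex-disjoint. -/
def VertDisj {V : Type*} (p q : List V) : Prop := ∀ v ∈ p, v ∉ q

/-- The vertices of the intermediate graph `D_int` (also the vertex set of `U_int`):
grid vertices `w_{i,j}^{q,ℓ}` (`grid i j q ℓ`, with `q` the column and `ℓ` the row,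
indices `0`-based) and terminal vertices `a i`, `b i`, `c j`, `d j`. -/
inductive DIntV (k N : ℕ) where
  | grid (i j : Fin k) (q ℓ : Fin N)
  | a (i : Fin k)
  | b (i : Fin k)
  | c (j : Fin k)
  | d (j : Fin k)
  deriving DecidableEq, Fintype

/-- The directed edges of `D_int`. -/
inductive DIntE (k N : ℕ) : DIntV k N → DIntV k N → Prop where
  /-- `w_{i,j}^{q,ℓ} → w_{i,j}^{q,ℓ+1}` for `ℓ < N` -/
  | up (i j : Fin k) (q ℓ ℓ' : Fin N) (h : (ℓ' : ℕ) = (ℓ : ℕ) + 1) :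
      DIntE k N (.grid i j q ℓ) (.grid i j q ℓ')
  /-- `w_{i,j}^{q,ℓ} → w_{i,j}^{q+1,ℓ}` for `q < N` -/
  | right (i j : Fin k) (q q' ℓ : Fin N) (h : (q' : ℕ) = (q : ℕ) + 1) :
      DIntE k N (.grid i j q ℓ) (.grid i j q' ℓ)
  /-- `w_{i,j}^{N,ℓ} → w_{i+1,j}^{1,ℓ}` for `i < k` -/
  | hmatch (i i' j : Fin k) (q q' ℓ : Fin N)
      (hi : (i' : ℕ) = (i : ℕ) + 1) (hq : (q : ℕ) + 1 = N) (hq' : (q' : ℕ) = 0) :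
      DIntE k N (.grid i j q ℓ) (.grid i' j q' ℓ)
  /-- `w_{i,j}^{ℓ,N} → w_{i,j+1}^{ℓ,1}` for `j < k` -/
  | vmatch (i j j' : Fin k) (q ℓ ℓ' : Fin N)
      (hj : (j' : ℕ) = (j : ℕ) + 1) (hl : (ℓ : ℕ) + 1 = N) (hl' : (ℓ' : ℕ) = 0) :
      DIntE k N (.grid i j q ℓ) (.grid i j' q ℓ')
  /-- `a_i → w_{i,1}^{q,1}` for all `q ∈ [N]` -/
  | srcA (i j : Fin k) (q ℓ : Fin N) (hj : (j : ℕ) = 0) (hl : (ℓ : ℕ) = 0) :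
      DIntE k N (.a i) (.grid i j q ℓ)
  /-- `w_{i,k}^{q,N} → b_i` for all `q ∈ [N]` -/
  | snkB (i j : Fin k) (q ℓ : Fin N) (hj : (j : ℕ) + 1 = k) (hl : (ℓ : ℕ) + 1 = N) :
      DIntE k N (.grid i j q ℓ) (.b i)
  /-- `c_j → w_{1,j}^{1,ℓ}` for all `ℓ ∈ [N]` -/
  | srcC (i j : Fin k) (q ℓ : Fin N) (hi : (i : ℕ) = 0) (hq : (q : ℕ) = 0) :
      DIntE k N (.c j) (.grid i j q ℓ)
  /-- `w_{k,j}^{N,ℓ} → d_j` for all `ℓ ∈ [N]` -/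
  | snkD (i j : Fin k) (q ℓ : Fin N) (hi : (i : ℕ) + 1 = k) (hq : (q : ℕ) + 1 = N) :
      DIntE k N (.grid i j q ℓ) (.d j)

/-- The horizontal canonical path `Canonical(r; c_j ⇝ d_j)`, as the list of its
vertices : `c_j`, then row `r` of the grids `D_{1,j}, …, D_{k,j}` from left to right,
then `d_j`. -/
def canonH (k N : ℕ) (j : Fin k) (r : Fin N) : List (DIntV k N) :=
  DIntV.c j ::
    (((List.finRange k).flatMap fun i =>
        (List.finRange N).map fun q => DIntV.grid i j q r) ++ [DIntV.d j])

/-- The vertical canonical path `Canonical(r; a_i ⇝ b_i)`, as the list of its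
vertices : `a_i`, then column `r` of the grids `D_{i,1}, …, D_{i,k}` from bottom to top,
then `b_i`. -/
def canonV (k N : ℕ) (i : Fin k) (r : Fin N) : List (DIntV k N) :=
  DIntV.a i ::
    (((List.finRange k).flatMap fun j =>
        (List.finRange N).map fun ℓ => DIntV.grid i j r ℓ) ++ [DIntV.b i])
/-- The adjacency relation of the undirected graph `U_int`: the symmetrization of the
edges of `D_int` (i.e. the same grid, matching and terminal edges, undirected). -/
def UIntAdj (k N : ℕ) : DIntV k N → DIntV k N → Prop := UAdj (DIntE k N)

/-- The vertex costs in `U_int`: each grid (black) vertex has cost `1`, and each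
terminal (green) vertex has cost `2kN`. -/
def costInt (k N : ℕ) : DIntV k N → ℕ
  | .grid _ _ _ _ => 1
  | _ => 2 * k * N
namespace S15
open List

variable {k N : ℕ}

/-- The "level" of a vertex. -/
def lev : DIntV k N → ℕ
  | .grid _ j _ ℓ => (j : ℕ) * N + (ℓ : ℕ)
  | .b _ => k * N - 1
  | _ => 0

def isGrid : DIntV k N → Bool
  | .grid _ _ _ _ => true
  | _ => false

/-- The `t`-th grid vertex of the canonical vertical path. -/
def gfun (hk : 0 < k) (hN : 0 < N) (i : Fin k) (r : Fin N) (t : ℕ) : DIntV k N :=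
  .grid i ⟨t / N % k, Nat.mod_lt _ hk⟩ r ⟨t % N, Nat.mod_lt _ hN⟩

lemma div_lt_of_lt_mul' {t : ℕ} (h : t < k * N) : t / N < k :=
  Nat.div_lt_of_lt_mul (by rwa [mul_comm] at h)

lemma lev_gfun (hk : 0 < k) (hN : 0 < N) (i : Fin k) (r : Fin N) {t : ℕ} (h : t < k * N) :
    lev (gfun hk hN i r t) = t := by
  have h1 : t / N % k = t / N := Nat.mod_eq_of_lt (div_lt_of_lt_mul' h)
  simp only [gfun, lev, h1]
  rw [mul_comm]
  exact Nat.div_add_mod t N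

lemma gfun_lt (hk : 0 < k) (hN : 0 < N) (i : Fin k) (r : Fin N) (t : ℕ) :
    lev (gfun hk hN i r t) < k * N := by
  simp only [gfun, lev]
  have h1 : t / N % k < k := Nat.mod_lt _ hk
  have h2 : t % N < N := Nat.mod_lt _ hN
  calc t / N % k * N + t % N < t / N % k * N + N := by omega
    _ ≤ k * N := by
        have := Nat.succ_le_of_lt h1
        calc t / N % k * N + N = (t / N % k + 1) * N := by ring
          _ ≤ k * N := Nat.mul_le_mul_right _ this

lemma range_add' (a b : ℕ) : List.range (a + b) = List.range a ++ (List.range b).map (a + ·) := by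
  induction b with
  | zero => simp
  | succ b ih =>
    rw [← Nat.add_assoc, List.range_succ, ih, List.range_succ]
    simp

lemma finRange_map_eq {α : Type*} {n : ℕ} (F : Fin n → α) (H : ℕ → α)
    (h : ∀ m : Fin n, F m = H (m : ℕ)) :
    (List.finRange n).map F = (List.range n).map H := by
  apply List.ext_getElem <;> simp [h]

lemma gfun_eval (hk : 0 < k) (hN : 0 < N) (i : Fin k) (r : Fin N) (j : Fin k) (ℓ : Fin N) :
    gfun hk hN i r ((j : ℕ) * N + (ℓ : ℕ)) = DIntV.grid i j r ℓ := by
  have e : (j : ℕ) * N + (ℓ : ℕ) = (ℓ : ℕ) + N * (j : ℕ) := by ring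
  simp only [gfun, e, Nat.add_mul_div_left _ _ hN, Nat.add_mul_mod_self_left,
    Nat.div_eq_of_lt ℓ.isLt, Nat.mod_eq_of_lt ℓ.isLt, Nat.zero_add,
    Nat.mod_eq_of_lt j.isLt]

lemma range_flatMap {α : Type*} (N : ℕ) (h : ℕ → α) (k : ℕ) :
    (List.range k).flatMap (fun j => (List.range N).map fun ℓ => h (j * N + ℓ))
      = (List.range (k * N)).map h := by
  induction k with
  | zero => simp
  | succ k ih =>
    rw [List.range_succ, List.flatMap_append, ih, Nat.succ_mul, range_add', List.map_append]
    simp [List.map_map, Function.comp_def]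

lemma canonV_eq (hk : 0 < k) (hN : 0 < N) (i : Fin k) (r : Fin N) :
    canonV k N i r =
      DIntV.a i :: ((List.range (k * N)).map (gfun hk hN i r) ++ [DIntV.b i]) := by
  have h1 : ((List.finRange k).flatMap fun j =>
        (List.finRange N).map fun ℓ => DIntV.grid i j r ℓ)
      = (List.range k).flatMap fun j =>
          (List.range N).map fun ℓ => gfun hk hN i r (j * N + ℓ) := by
    rw [List.flatMap_def, List.flatMap_def]
    congr 1
    exact finRange_map_eq _ _
      (fun j => finRange_map_eq _ _ (fun ℓ => (gfun_eval hk hN i r j ℓ).symm))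
  rw [canonV, h1, range_flatMap]

end S15
namespace S15
variable {k N : ℕ}

lemma succ_div_mod_lt {t : ℕ} (hN : 0 < N) (h : t % N + 1 < N) :
    (t + 1) % N = t % N + 1 ∧ (t + 1) / N = t / N := by
  have h2 := Nat.div_add_mod t N
  have e : t + 1 = N * (t / N) + (t % N + 1) := by omega
  constructor
  · rw [e, Nat.mul_add_mod, Nat.mod_eq_of_lt h]
  · rw [e, Nat.mul_add_div hN, Nat.div_eq_of_lt h]; omega

lemma succ_div_mod_eq {t : ℕ} (hN : 0 < N) (h : t % N + 1 = N) :
    (t + 1) % N = 0 ∧ (t + 1) / N = t / N + 1 := by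
  have h2 := Nat.div_add_mod t N
  have e : t + 1 = N * (t / N + 1) := by
    rw [Nat.mul_add, Nat.mul_one]; omega
  constructor
  · rw [e, Nat.mul_mod_right]
  · rw [e, Nat.mul_div_cancel_left _ hN]

lemma last_div_mod (hk : 0 < k) (hN : 0 < N) :
    (k * N - 1) / N = k - 1 ∧ (k * N - 1) % N = N - 1 := by
  obtain ⟨K, rfl⟩ : ∃ K, k = K + 1 := ⟨k - 1, by omega⟩
  obtain ⟨M, rfl⟩ : ∃ M, N = M + 1 := ⟨N - 1, by omega⟩
  have e : (K + 1) * (M + 1) - 1 = (M + 1) * K + M := by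
    have : (K + 1) * (M + 1) = (M + 1) * K + M + 1 := by ring
    omega
  refine ⟨?_, ?_⟩
  · rw [e, Nat.mul_add_div (Nat.succ_pos M), Nat.div_eq_of_lt (by omega)]; omega
  · rw [e, Nat.mul_add_mod, Nat.mod_eq_of_lt (by omega)]; omega

lemma edge_a_g0 (hk : 0 < k) (hN : 0 < N) (i : Fin k) (r : Fin N) :
    DIntE k N (.a i) (gfun hk hN i r 0) := by
  exact DIntE.srcA i _ r _ (by simp [Nat.zero_div]) (by simp)

lemma edge_step (hk : 0 < k) (hN : 0 < N) (i : Fin k) (r : Fin N) {t : ℕ}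
    (h : t + 1 < k * N) :
    DIntE k N (gfun hk hN i r t) (gfun hk hN i r (t + 1)) := by
  have ht : t < k * N := by omega
  have hdt : t / N % k = t / N := Nat.mod_eq_of_lt (div_lt_of_lt_mul' ht)
  have hdt1 : (t + 1) / N % k = (t + 1) / N := Nat.mod_eq_of_lt (div_lt_of_lt_mul' h)
  rcases lt_or_eq_of_le (Nat.succ_le_of_lt (Nat.mod_lt t hN)) with hm | hm
  · obtain ⟨e1, e2⟩ := succ_div_mod_lt hN hm
    simp only [gfun, e1, e2, hdt, hdt1]
    exact DIntE.up i _ r _ _ rfl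
  · obtain ⟨e1, e2⟩ := succ_div_mod_eq hN hm
    have hd2 : (t / N + 1) % k = t / N + 1 := Nat.mod_eq_of_lt (e2 ▸ div_lt_of_lt_mul' h)
    simp only [gfun, e1, e2, hdt, hd2]
    exact DIntE.vmatch i _ _ r _ _ rfl hm rfl

lemma edge_g_b (hk : 0 < k) (hN : 0 < N) (i : Fin k) (r : Fin N) :
    DIntE k N (gfun hk hN i r (k * N - 1)) (.b i) := by
  obtain ⟨e1, e2⟩ := last_div_mod hk hN
  exact DIntE.snkB i _ r _
    (by simp only [e1, Nat.mod_eq_of_lt (by omega : k - 1 < k)]; omega)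
    (by simp only [e2]; omega)

lemma gfun_ne_a (hk : 0 < k) (hN : 0 < N) (i : Fin k) (r : Fin N) (t : ℕ) (i' : Fin k) :
    gfun hk hN i r t ≠ .a i' := by simp [gfun]

lemma gfun_ne_b (hk : 0 < k) (hN : 0 < N) (i : Fin k) (r : Fin N) (t : ℕ) (i' : Fin k) :
    gfun hk hN i r t ≠ .b i' := by simp [gfun]

lemma canonV_isPath (hk : 0 < k) (hN : 0 < N) (i : Fin k) (r : Fin N) :
    IsPathList (UAdj (DIntE k N)) (.a i) (.b i) (canonV k N i r) := by
  have hkN : 0 < k * N := Nat.mul_pos hk hN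
  obtain ⟨m, hm⟩ : ∃ m, k * N = m + 1 := ⟨k * N - 1, by omega⟩
  rw [canonV_eq hk hN]
  constructor
  · -- chain
    unfold List.Chain'
    rw [List.isChain_cons]
    constructor
    · intro y hy
      rw [hm, List.range_succ_eq_map] at hy
      simp only [List.map_cons, List.cons_append, List.head?_cons, Option.mem_def,
        Option.some.injEq] at hy
      subst hy
      exact Or.inl (edge_a_g0 hk hN i r)
    · rw [List.isChain_append]
      refine ⟨?_, List.isChain_singleton _, ?_⟩
      · rw [List.isChain_map, hm, List.isChain_range_succ]
        intro t ht
        exact Or.inl (edge_step hk hN i r (by omega))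
      · intro x hx y hy
        rw [hm, List.range_succ, List.map_append, List.map_singleton] at hx
        rw [List.getLast?_concat] at hx
        simp only [Option.mem_def, Option.some.injEq] at hx hy
        rw [List.head?_cons, Option.some.injEq] at hy
        subst hx; subst hy
        have : m = k * N - 1 := by omega
        subst this
        exact Or.inl (edge_g_b hk hN i r)
  · -- nodup
    refine List.nodup_cons.2 ⟨?_, ?_⟩
    · simp only [List.mem_append, List.mem_map, List.mem_singleton, List.mem_range]
      rintro (⟨t, _, ht⟩ | h)
      · exact gfun_ne_a hk hN i r t i ht
      · exact absurd h (by simp)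
    · refine List.Nodup.append ?_ (List.nodup_singleton _) ?_
      · refine (List.nodup_range).map_on ?_
        intro t1 h1 t2 h2 he
        rw [List.mem_range] at h1 h2
        have := lev_gfun hk hN i r h1
        rw [he, lev_gfun hk hN i r h2] at this
        omega
      · intro x hx
        simp only [List.mem_map, List.mem_range] at hx
        obtain ⟨t, _, rfl⟩ := hx
        simp only [List.mem_singleton]
        exact gfun_ne_b hk hN i r t i
  · rfl
  · rw [← List.cons_append, List.getLast?_concat]

lemma sum_map_one {α : Type*} (l : List α) : (l.map fun _ => (1 : ℕ)).sum = l.length := by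
  induction l with
  | nil => rfl
  | cons a l ih => simp [ih, Nat.add_comm]

lemma canonV_cost (hk : 0 < k) (hN : 0 < N) (i : Fin k) (r : Fin N) :
    pathCost (costInt k N) (canonV k N i r) = 5 * k * N := by
  rw [canonV_eq hk hN]
  simp only [pathCost, List.map_cons, List.map_append, List.map_map, List.sum_cons,
    List.sum_append, List.map_singleton, List.sum_singleton]
  have h1 : ((List.range (k * N)).map (costInt k N ∘ gfun hk hN i r)).sum = k * N := by
    have : costInt k N ∘ gfun hk hN i r = fun _ => (1 : ℕ) := by
      funext t; rfl
    rw [this, sum_map_one, List.length_range]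
  rw [h1]
  show 2 * k * N + (k * N + 2 * k * N) = 5 * k * N
  ring

end S15
namespace S15
variable {k N : ℕ}

lemma isGrid_iff {v : DIntV k N} : isGrid v = true ↔ ∃ a b c d, v = DIntV.grid a b c d := by
  cases v <;> simp [isGrid]

lemma cost_nongrid {v : DIntV k N} (h : ¬ isGrid v = true) : costInt k N v = 2 * k * N := by
  cases v <;> first | (exact absurd rfl h) | rfl

lemma lev_grid_lt (a : Fin k) (b : Fin k) (c d : Fin N) : lev (DIntV.grid a b c d) < k * N := by
  show (b : ℕ) * N + (d : ℕ) < k * N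
  have h1 : ((b : ℕ) + 1) * N ≤ k * N := Nat.mul_le_mul_right _ b.isLt
  have h2 : ((b : ℕ) + 1) * N = (b : ℕ) * N + N := by ring
  have h3 := d.isLt
  omega

/-- Classification of an undirected edge out of a grid vertex that increases the level. -/
lemma step_up {u w : DIntV k N} (h : UAdj (DIntE k N) u w)
    (iu ju : Fin k) (qu ℓu : Fin N) (hu : u = .grid iu ju qu ℓu)
    (hw : isGrid w = true) (hlev : lev w = lev u + 1) :
    (∃ ℓ' : Fin N, (ℓ' : ℕ) = (ℓu : ℕ) + 1 ∧ w = .grid iu ju qu ℓ') ∨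
    (∃ j' : Fin k, (j' : ℕ) = (ju : ℕ) + 1 ∧ (ℓu : ℕ) + 1 = N ∧
      ∃ ℓ' : Fin N, (ℓ' : ℕ) = 0 ∧ w = .grid iu j' qu ℓ') := by
  subst hu
  obtain ⟨a2, b2, c2, d2, rfl⟩ := isGrid_iff.1 hw
  simp only [lev] at hlev
  rcases h with h | h
  · cases h with
    | up _ _ _ _ _ hl => refine Or.inl ⟨_, ?_, rfl⟩; assumption
    | right _ _ _ _ _ hq => omega
    | hmatch _ _ _ _ _ _ hi hq hq' => omega
    | vmatch _ _ _ _ _ _ hj hl hl' => refine Or.inr ⟨_, ?_, ?_, _, ?_, rfl⟩ <;> assumption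
  · exfalso
    cases h with
    | up _ _ _ _ ℓ' hl => omega
    | right _ _ _ q' _ hq => omega
    | hmatch i2 i' _ q q' _ hi hq hq' => omega
    | vmatch _ _ j' _ _ ℓ' hj hl hl' =>
        have e : ((b2 : ℕ) + 1) * N = (b2 : ℕ) * N + N := by ring
        rw [hj] at hlev
        omega

/-- A grid-grid undirected edge increases the level by at most one. -/
lemma lev_step {u v : DIntV k N} (hu : isGrid u = true) (hv : isGrid v = true)
    (h : UAdj (DIntE k N) u v) : lev v ≤ lev u + 1 := by
  obtain ⟨a1, b1, c1, d1, rfl⟩ := isGrid_iff.1 hu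
  obtain ⟨a2, b2, c2, d2, rfl⟩ := isGrid_iff.1 hv
  rcases h with h | h
  · cases h with
    | up _ _ _ _ ℓ' hl => simp only [lev]; omega
    | right _ _ _ q' _ hq => simp only [lev]; omega
    | hmatch i2 i' _ q q' _ hi hq hq' => simp only [lev]; omega
    | vmatch _ _ j' _ _ ℓ' hj hl hl' =>
        simp only [lev]
        have e : ((b1 : ℕ) + 1) * N = (b1 : ℕ) * N + N := by ring
        rw [hj]
        omega
  · cases h with
    | up _ _ _ _ ℓ' hl => simp only [lev]; omega
    | right _ _ _ q' _ hq => simp only [lev]; omega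
    | hmatch i2 i' _ q q' _ hi hq hq' => simp only [lev]; omega
    | vmatch _ _ j' _ _ ℓ' hj hl hl' =>
        simp only [lev]
        have e : ((b2 : ℕ) + 1) * N = (b2 : ℕ) * N + N := by ring
        rw [hj]
        omega

/-- Discrete intermediate value theorem along a chain whose steps increase `f` by at most 1. -/
lemma ivt {α : Type*} (f : α → ℕ) :
    ∀ (xs : List α), xs.Chain' (fun x y => f y ≤ f x + 1) →
      ∀ x, xs.head? = some x → ∀ z, xs.getLast? = some z →
      ∀ m, f x ≤ m → m ≤ f z → ∃ v ∈ xs, f v = m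
  | [] => by simp
  | [x] => by
      intro _ x' hx z hz m h1 h2
      simp only [List.head?_cons, Option.some.injEq] at hx
      simp only [List.getLast?_singleton, Option.some.injEq] at hz
      subst hx; subst hz
      exact ⟨x, List.mem_singleton_self x, by omega⟩
  | x :: y :: tl => by
      intro hc x' hx z hz m h1 h2
      rw [List.head?_cons, Option.some.injEq] at hx
      subst hx
      rcases Nat.lt_or_ge m (f x + 1) with hge | hlt
      · exact ⟨x, List.mem_cons_self, by omega⟩
      · have hy : f y ≤ f x + 1 := (List.isChain_cons_cons.1 hc).1
        obtain ⟨v, hv, he⟩ := ivt f (y :: tl) (List.isChain_cons_cons.1 hc).2 y rfl z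
          (by rwa [List.getLast?_cons_cons] at hz) m (by omega) h2
        exact ⟨v, List.mem_cons_of_mem _ hv, he⟩

lemma chain_le_bound {α : Type*} (f : α → ℕ) (l : List α)
    (h : l.Chain' (fun x y => f y ≤ f x + 1)) :
    ∀ t (ht : t < l.length) s (hst : s ≤ t),
      f (l.get ⟨t, ht⟩) ≤ f (l.get ⟨s, by omega⟩) + (t - s) := by
  intro t
  induction t with
  | zero =>
      intro ht s hst
      have : s = 0 := by omega
      subst this
      simp
  | succ t ih =>
      intro ht s hst
      rcases Nat.eq_or_lt_of_le hst with rfl | hlt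
      · simp
      · have h1 := ih (by omega) s (by omega)
        have h2 : f (l.get ⟨t + 1, ht⟩) ≤ f (l.get ⟨t, by omega⟩) + 1 :=
          List.isChain_iff_getElem.1 h t (by omega)
        omega

end S15
namespace S15
variable {k N : ℕ}

lemma cost_grid {v : DIntV k N} (h : isGrid v = true) : costInt k N v = 1 := by
  obtain ⟨a, b, c, d, rfl⟩ := isGrid_iff.1 h; rfl

lemma cheap_eq_canon (hk : 0 < k) (hN : 0 < N) (i : Fin k) (p : List (DIntV k N))
    (hp : IsPathList (UAdj (DIntE k N)) (.a i) (.b i) p)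
    (hc : pathCost (costInt k N) p ≤ 5 * k * N) :
    ∃ r : Fin N, p = canonV k N i r := by
  obtain ⟨hchain, hnodup, hhead, hlast⟩ := hp
  have hkN : 0 < k * N := Nat.mul_pos hk hN
  cases p with
  | nil => simp at hhead
  | cons v rest =>
  rw [List.head?_cons, Option.some.injEq] at hhead
  subst hhead
  have hne : rest ≠ [] := by
    rintro rfl
    simp [List.getLast?] at hlast
  have hgl : rest.getLast hne = DIntV.b i := by
    rw [show (DIntV.a i :: rest) = [DIntV.a i] ++ rest from rfl, List.getLast?_append,
      List.getLast?_eq_getLast hne] at hlast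
    simpa using hlast
  have hdecomp : rest = rest.dropLast ++ [DIntV.b i] := by
    conv_lhs => rw [← List.dropLast_concat_getLast hne]
    rw [hgl]
  obtain ⟨mid, rfl⟩ : ∃ mid, rest = mid ++ [DIntV.b i] := ⟨_, hdecomp⟩
  clear hne hgl hdecomp hlast
  -- nodup facts
  rw [List.nodup_cons] at hnodup
  obtain ⟨hamem, hnodup⟩ := hnodup
  rw [List.nodup_append] at hnodup
  obtain ⟨hmidnd, -, hdisj⟩ := hnodup
  have hbnotmid : DIntV.b i ∉ mid := fun h => hdisj _ h _ (List.mem_singleton_self _) rfl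
  have hanotmid : DIntV.a i ∉ mid := fun h => hamem (List.mem_append_left _ h)
  -- cost structure
  have hcost : pathCost (costInt k N) (DIntV.a i :: (mid ++ [DIntV.b i]))
      = 2 * k * N + ((mid.map (costInt k N)).sum + 2 * k * N) := by
    simp only [pathCost, List.map_cons, List.map_append, List.map_singleton, List.sum_cons,
      List.sum_append, List.sum_singleton]
    rfl
  rw [hcost] at hc
  -- every interior vertex is a grid vertex
  have hgridmid : ∀ v ∈ mid, isGrid v = true := by
    intro v hv
    by_contra hng
    have h1 : 2 * k * N ≤ (mid.map (costInt k N)).sum := by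
      have := List.le_sum_of_mem (List.mem_map_of_mem (f := costInt k N) hv)
      rwa [cost_nongrid hng] at this
    have e1 : 2 * k * N = 2 * (k * N) := by ring
    have e2 : 5 * k * N = 5 * (k * N) := by ring
    omega
  -- mid is nonempty
  have hmidne : mid ≠ [] := by
    rintro rfl
    rw [List.nil_append] at hchain
    have hadj := (List.isChain_cons_cons.1 hchain).1
    rcases hadj with h | h <;> cases h
  obtain ⟨v1, mid', rfl⟩ : ∃ v1 mid', mid = v1 :: mid' := by
    cases mid with
    | nil => exact absurd rfl hmidne
    | cons a l => exact ⟨a, l, rfl⟩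
  clear hmidne
  -- first edge
  rw [List.cons_append] at hchain
  have hadj1 : UAdj (DIntE k N) (DIntV.a i) v1 := (List.isChain_cons_cons.1 hchain).1
  obtain ⟨j0, r, ℓ0, hj0, hℓ0, rfl⟩ :
      ∃ (j0 : Fin k) (r : Fin N) (ℓ0 : Fin N), (j0 : ℕ) = 0 ∧ (ℓ0 : ℕ) = 0 ∧ v1 = DIntV.grid i j0 r ℓ0 := by
    rcases hadj1 with h | h
    · cases h with
      | srcA => refine ⟨_, _, _, ?_, ?_, rfl⟩ <;> assumption
    · cases h
  clear hadj1
  rw [← List.cons_append] at hchain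
  set M : List (DIntV k N) := DIntV.grid i j0 r ℓ0 :: mid' with hM
  have hMne : M ≠ [] := by simp [hM]
  -- chain on M and last edge
  have hchainT : List.Chain' (UAdj (DIntE k N)) (M ++ [DIntV.b i]) := hchain.tail
  obtain ⟨hchainM, -, hlastedge⟩ := List.isChain_append.1 hchainT
  have hlastE : UAdj (DIntE k N) (M.getLast hMne) (DIntV.b i) :=
    hlastedge _ (List.getLast?_eq_getLast hMne) _ rfl
  obtain ⟨jl, ql, ℓl, hjl, hℓl, hglast⟩ :
      ∃ (jl : Fin k) (ql : Fin N) (ℓl : Fin N), ((jl : ℕ) + 1 = k) ∧ ((ℓl : ℕ) + 1 = N) ∧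
        M.getLast hMne = DIntV.grid i jl ql ℓl := by
    generalize hgl2 : M.getLast hMne = u at hlastE
    rcases hlastE with h | h
    · cases h with
      | snkB => refine ⟨_, _, _, ?_, ?_, rfl⟩ <;> assumption
    · cases h
  have hlevlast : lev (M.getLast hMne) = k * N - 1 := by
    rw [hglast]
    show (jl : ℕ) * N + (ℓl : ℕ) = k * N - 1
    have e1 : ((jl : ℕ) + 1) * N = k * N := by rw [hjl]
    have e2 : ((jl : ℕ) + 1) * N = (jl : ℕ) * N + N := by ring
    omega
  -- level chain
  have hlevchain : M.Chain' (fun x y => lev y ≤ lev x + 1) := by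
    unfold List.Chain'
    rw [List.isChain_iff_getElem] at hchainM ⊢
    intro t ht
    exact lev_step (hgridmid _ (List.getElem_mem _)) (hgridmid _ (List.getElem_mem _))
      (hchainM t ht)
  -- covering all levels
  have hlev0 : lev (DIntV.grid i j0 r ℓ0) = 0 := by
    show (j0 : ℕ) * N + (ℓ0 : ℕ) = 0
    simp [hj0, hℓ0]
  have hcover : ∀ m, m < k * N → ∃ v ∈ M, lev v = m := by
    intro m hm
    exact ivt lev M hlevchain _ rfl _ (List.getLast?_eq_getLast hMne) m
      (by omega) (by omega)
  -- length of M is exactly k*N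
  have hlen_ge : k * N ≤ M.length := by
    have h1 : Finset.range (k * N) ⊆ M.toFinset.image lev := by
      intro m hm
      rw [Finset.mem_image]
      obtain ⟨v, hv, he⟩ := hcover m (Finset.mem_range.1 hm)
      exact ⟨v, List.mem_toFinset.2 hv, he⟩
    calc k * N = (Finset.range (k * N)).card := (Finset.card_range _).symm
      _ ≤ (M.toFinset.image lev).card := Finset.card_le_card h1
      _ ≤ M.toFinset.card := Finset.card_image_le
      _ = M.length := List.toFinset_card_of_nodup hmidnd
  have hsum1 : (M.map (costInt k N)).sum = M.length := by
    rw [List.map_congr_left (fun v hv => cost_grid (hgridmid v hv)), sum_map_one]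
  have hlen : M.length = k * N := by
    rw [hsum1] at hc
    have e1 : 2 * k * N = 2 * (k * N) := by ring
    have e2 : 5 * k * N = 5 * (k * N) := by ring
    omega
  -- exact levels along M
  have hlenpos : 0 < M.length := by rw [hM]; simp
  have hgetlast : lev (M.get ⟨M.length - 1, by omega⟩) = k * N - 1 := by
    rw [List.get_eq_getElem, ← List.getLast_eq_getElem hMne]
    exact hlevlast
  have levat : ∀ t (ht : t < M.length), lev (M.get ⟨t, ht⟩) = t := by
    intro t ht
    have up1 := chain_le_bound lev M hlevchain t ht 0 (Nat.zero_le _)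
    have hf0 : lev (M.get ⟨0, by omega⟩) = 0 := hlev0
    have low := chain_le_bound lev M hlevchain (M.length - 1) (by omega) t (by omega)
    omega
  -- reconstruct M as the canonical list
  have hmain : ∀ t (ht : t < M.length), M.get ⟨t, ht⟩ = gfun hk hN i r t := by
    intro t
    induction t with
    | zero =>
        intro ht
        show DIntV.grid i j0 r ℓ0 = _
        have e1 : j0 = ⟨0 / N % k, Nat.mod_lt _ hk⟩ := Fin.ext (by simp [hj0])
        have e2 : ℓ0 = ⟨0 % N, Nat.mod_lt _ hN⟩ := Fin.ext (by simp [hℓ0])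
        rw [e1, e2]
        rfl
    | succ t ih =>
        intro ht
        have ht' : t < M.length := by omega
        have hu := ih ht'
        have hadj : UAdj (DIntE k N) (M.get ⟨t, ht'⟩) (M.get ⟨t + 1, ht⟩) :=
          List.isChain_iff_getElem.1 hchainM t (by omega)
        have hlw : lev (M.get ⟨t + 1, ht⟩) = t + 1 := levat _ _
        have hlu : lev (M.get ⟨t, ht'⟩) = t := levat _ _
        have hwgrid : isGrid (M.get ⟨t + 1, ht⟩) = true := hgridmid _ (List.get_mem M _)
        have hlt_kN : t + 1 < k * N := by omega
        have htkN : t < k * N := by omega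
        have hdt : t / N % k = t / N := Nat.mod_eq_of_lt (div_lt_of_lt_mul' htkN)
        rcases step_up hadj i ⟨t / N % k, Nat.mod_lt _ hk⟩ r ⟨t % N, Nat.mod_lt _ hN⟩ hu
            hwgrid (by omega) with
          ⟨ℓ', hl', hw⟩ | ⟨j', hj', hlN, ℓ', hl0, hw⟩
        · have hmlt : t % N + 1 < N := hl' ▸ ℓ'.isLt
          obtain ⟨e1, e2⟩ := succ_div_mod_lt hN hmlt
          have ej : (⟨t / N % k, Nat.mod_lt _ hk⟩ : Fin k)
              = ⟨(t + 1) / N % k, Nat.mod_lt _ hk⟩ := Fin.ext (by simp [e2])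
          have el : ℓ' = ⟨(t + 1) % N, Nat.mod_lt _ hN⟩ := Fin.ext (by simp [e1, hl'])
          rw [hw, ej, el]
          rfl
        · obtain ⟨e1, e2⟩ := succ_div_mod_eq hN hlN
          have hd1 : (t / N + 1) % k = t / N + 1 :=
            Nat.mod_eq_of_lt (e2 ▸ div_lt_of_lt_mul' hlt_kN)
          have ej : j' = ⟨(t + 1) / N % k, Nat.mod_lt _ hk⟩ :=
            Fin.ext (by simp [hj', e2, hd1, hdt])
          have el : ℓ' = ⟨(t + 1) % N, Nat.mod_lt _ hN⟩ := Fin.ext (by simp [hl0, e1])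
          rw [hw, ej, el]
          rfl
  have hfin : M = (List.range (k * N)).map (gfun hk hN i r) := by
    apply List.ext_get
    · rw [List.length_map, List.length_range, hlen]
    · intro n h1 h2
      rw [hmain n h1]
      simp only [List.get_eq_getElem, List.getElem_map, List.getElem_range]
  exact ⟨r, by rw [canonV_eq hk hN, ← hfin]⟩

end S15
/-- for every `i ∈ [k]`: (i) for each `r ∈ [N]` the vertical canonical
path `Canonical(r; a_i–b_i)` is a shortest (minimum-cost) `a_i`–`b_i` path in `U_int`,
with cost exactly `5kN`; and (ii) every shortest `a_i`–`b_i` path in `U_int` equals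
`Canonical(ℓ; a_i–b_i)` for some `ℓ ∈ [N]`. -/
theorem UInt_canonV_shortest (N k : ℕ) (hN : 1 ≤ N) (hk : 1 ≤ k) (i : Fin k) :
    (∀ r : Fin N,
      IsShortestCostPath (DIntE k N) (costInt k N) (DIntV.a i) (DIntV.b i)
        (canonV k N i r) ∧
      pathCost (costInt k N) (canonV k N i r) = 5 * k * N) ∧
    (∀ p : List (DIntV k N),
      IsShortestCostPath (DIntE k N) (costInt k N) (DIntV.a i) (DIntV.b i) p →
      ∃ ℓ : Fin N, p = canonV k N i ℓ) := by
  have hk' : 0 < k := hk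
  have hN' : 0 < N := hN
  have hmin : ∀ q, IsPathList (UAdj (DIntE k N)) (DIntV.a i) (DIntV.b i) q →
      5 * k * N ≤ pathCost (costInt k N) q := by
    intro q hq
    by_contra h
    push_neg at h
    obtain ⟨r, hr⟩ := S15.cheap_eq_canon hk' hN' i q hq (le_of_lt h)
    rw [hr, S15.canonV_cost hk' hN' i r] at h
    exact lt_irrefl _ h
  constructor
  · intro r
    refine ⟨⟨S15.canonV_isPath hk' hN' i r, fun q hq => ?_⟩, S15.canonV_cost hk' hN' i r⟩
    exact le_trans (le_of_eq (S15.canonV_cost hk' hN' i r)) (hmin q hq)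
  · intro p hp
    obtain ⟨hpath, hopt⟩ := hp
    have hle : pathCost (costInt k N) p ≤ 5 * k * N := by
      have h2 := hopt (canonV k N i ⟨0, hN'⟩) (S15.canonV_isPath hk' hN' i ⟨0, hN'⟩)
      rwa [S15.canonV_cost hk' hN' i ⟨0, hN'⟩] at h2
    exact S15.cheap_eq_canon hk' hN' i p hpath hle
end

section
/- If G contains a clique {v_{γ_1},…,v_{γ_k}} of size k (k distinct, pairwise adjacent vertices), then the 2k paths Canonical_vertex(γ_i; a_i–b_i) for i ∈ [k] and Canonical_vertex(γ_j; c_j–d_j) for j ∈ [k] are pairwise vertex-disjoint and each is a shortest (minimum-cost) path in U_vertex between its terminal pair; in particular all 2k terminal pairs of (U_vertex, T) can be simultaneously satisfied by pairwise vertex-disjoint shortest paths. -/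
/-- `(q,ℓ) ∈ S_{i,j}`: for `i = j` this means `q = ℓ` and for `i ≠ j` it means that
`v_q v_ℓ` is an edge of `G`. -/
def Split {k N : ℕ} (G : SimpleGraph (Fin N)) (i j : Fin k) (q ℓ : Fin N) : Prop :=
  (i = j ∧ q = ℓ) ∨ (i ≠ j ∧ G.Adj q ℓ)

instance {k N : ℕ} (G : SimpleGraph (Fin N)) [DecidableRel G.Adj]
    (i j : Fin k) (q ℓ : Fin N) : Decidable (Split G i j q ℓ) := by
  unfold Split; infer_instance

/-- The vertices of the graph `D_vertex` (also the vertex set of `U_vertex`): each grid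
vertex `w_{i,j}^{q,ℓ}` of `D_int` gives rise to `gridH i j q ℓ` (the vertex `w_Hor`) and
`gridV i j q ℓ` (the vertex `w_Ver`, which carries edges only when `w` is vertex-split;
when `w` is not split the single vertex `w_Hor = w_Ver` is represented by `gridH` and
`gridV` is isolated), plus the terminal vertices. -/
inductive DVertV (k N : ℕ) where
  | gridH (i j : Fin k) (q ℓ : Fin N)
  | gridV (i j : Fin k) (q ℓ : Fin N)
  | a (i : Fin k)
  | b (i : Fin k)
  | c (j : Fin k)
  | d (j : Fin k)
  deriving DecidableEq

/-- The vertex of `D_vertex` carrying the vertical (south/north) edges at the former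
grid vertex `w_{i,j}^{q,ℓ}`: `w_Ver` if it is vertex-split, and `w_Hor = w_Ver`
otherwise. -/
def vNode {k N : ℕ} (G : SimpleGraph (Fin N)) [DecidableRel G.Adj]
    (i j : Fin k) (q ℓ : Fin N) : DVertV k N :=
  if Split G i j q ℓ then DVertV.gridV i j q ℓ else DVertV.gridH i j q ℓ

/-- The directed edges of `D_vertex`: horizontal (west/east) edges attach to `w_Hor`
and vertical (south/north) edges attach to `w_Ver` (with `w_Hor = w_Ver` at non-split
vertices); terminal edges play the role of the corresponding boundary edges. -/
inductive DVertE (k N : ℕ) (G : SimpleGraph (Fin N)) [DecidableRel G.Adj] :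
    DVertV k N → DVertV k N → Prop where
  /-- former edge `w_{i,j}^{q,ℓ} → w_{i,j}^{q,ℓ+1}` (vertical) -/
  | up (i j : Fin k) (q ℓ ℓ' : Fin N) (h : (ℓ' : ℕ) = (ℓ : ℕ) + 1) :
      DVertE k N G (vNode G i j q ℓ) (vNode G i j q ℓ')
  /-- former edge `w_{i,j}^{q,ℓ} → w_{i,j}^{q+1,ℓ}` (horizontal) -/
  | right (i j : Fin k) (q q' ℓ : Fin N) (h : (q' : ℕ) = (q : ℕ) + 1) :
      DVertE k N G (.gridH i j q ℓ) (.gridH i j q' ℓ)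
  /-- former edge `w_{i,j}^{N,ℓ} → w_{i+1,j}^{1,ℓ}` (horizontal) -/
  | hmatch (i i' j : Fin k) (q q' ℓ : Fin N)
      (hi : (i' : ℕ) = (i : ℕ) + 1) (hq : (q : ℕ) + 1 = N) (hq' : (q' : ℕ) = 0) :
      DVertE k N G (.gridH i j q ℓ) (.gridH i' j q' ℓ)
  /-- former edge `w_{i,j}^{ℓ,N} → w_{i,j+1}^{ℓ,1}` (vertical) -/
  | vmatch (i j j' : Fin k) (q ℓ ℓ' : Fin N)
      (hj : (j' : ℕ) = (j : ℕ) + 1) (hl : (ℓ : ℕ) + 1 = N) (hl' : (ℓ' : ℕ) = 0) :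
      DVertE k N G (vNode G i j q ℓ) (vNode G i j' q ℓ')
  /-- former edge `a_i → w_{i,1}^{q,1}` (vertical: `a_i` plays the south neighbour) -/
  | srcA (i j : Fin k) (q ℓ : Fin N) (hj : (j : ℕ) = 0) (hl : (ℓ : ℕ) = 0) :
      DVertE k N G (.a i) (vNode G i j q ℓ)
  /-- former edge `w_{i,k}^{q,N} → b_i` (vertical) -/
  | snkB (i j : Fin k) (q ℓ : Fin N) (hj : (j : ℕ) + 1 = k) (hl : (ℓ : ℕ) + 1 = N) :
      DVertE k N G (vNode G i j q ℓ) (.b i)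
  /-- former edge `c_j → w_{1,j}^{1,ℓ}` (horizontal: `c_j` plays the west neighbour) -/
  | srcC (i j : Fin k) (q ℓ : Fin N) (hi : (i : ℕ) = 0) (hq : (q : ℕ) = 0) :
      DVertE k N G (.c j) (.gridH i j q ℓ)
  /-- former edge `w_{k,j}^{N,ℓ} → d_j` (horizontal) -/
  | snkD (i j : Fin k) (q ℓ : Fin N) (hi : (i : ℕ) + 1 = k) (hq : (q : ℕ) + 1 = N) :
      DVertE k N G (.gridH i j q ℓ) (.d j)

/-- `Canonical_vertex(r; c_j⇝d_j)`: obtained from `Canonical(r; c_j⇝d_j)` by routing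
through `w_Hor` at every vertex-split grid vertex (and through `w_Hor = w_Ver` at
not-split vertices). -/
def canonVertH (k N : ℕ) (j : Fin k) (r : Fin N) : List (DVertV k N) :=
  DVertV.c j ::
    (((List.finRange k).flatMap fun i =>
        (List.finRange N).map fun q => DVertV.gridH i j q r) ++ [DVertV.d j])

/-- `Canonical_vertex(r; a_i⇝b_i)`: obtained from `Canonical(r; a_i⇝b_i)` by routing
through `w_Ver` at every vertex-split grid vertex (and through `w_Hor = w_Ver` at
not-split vertices). -/
def canonVertV {k N : ℕ} (G : SimpleGraph (Fin N)) [DecidableRel G.Adj]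
    (i : Fin k) (r : Fin N) : List (DVertV k N) :=
  DVertV.a i ::
    (((List.finRange k).flatMap fun j =>
        (List.finRange N).map fun ℓ => vNode G i j r ℓ) ++ [DVertV.b i])
/-- The vertex costs in `U_vertex`: each (black) vertex arising from the splitting of a
grid vertex has cost `1`, and each terminal (green) vertex has cost `2kN`. -/
def costVert (k N : ℕ) : DVertV k N → ℕ
  | .gridH _ _ _ _ => 1
  | .gridV _ _ _ _ => 1
  | _ => 2 * k * N

section GenListAux
open List

-- generic list lemmas
lemma length_le_sum (l : List ℕ) (h : ∀ x ∈ l, 1 ≤ x) : l.length ≤ l.sum := by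
  induction l with
  | nil => simp
  | cons a t ih =>
    simp only [length_cons, sum_cons]
    have h1 := ih (fun x hx => h x (mem_cons_of_mem _ hx))
    have h2 := h a mem_cons_self
    omega

lemma sum_map_of_one {α : Type*} (f : α → ℕ) (l : List α) (h : ∀ x ∈ l, f x = 1) :
    (l.map f).sum = l.length := by
  induction l with
  | nil => simp
  | cons a t ih => simp_all; omega

lemma chain'_finRange {n : ℕ} (S : Fin n → Fin n → Prop)
    (h : ∀ (a : ℕ) (h0 : a < n) (h1 : a + 1 < n), S ⟨a, h0⟩ ⟨a+1, h1⟩) :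
    (List.finRange n).Chain' S := by
  simp only [List.Chain']; rw [isChain_iff_getElem]
  intro i hi
  simp only [length_finRange] at hi
  simp only [getElem_finRange, Fin.cast_mk]
  exact h i (by omega) (by omega)

lemma head?_finRange {n : ℕ} (h : 0 < n) : (List.finRange n).head? = some ⟨0, h⟩ := by
  cases n with
  | zero => omega
  | succ m => rw [List.finRange_succ]; rfl

lemma getLast?_finRange {n : ℕ} (h : 0 < n) :
    (List.finRange n).getLast? = some ⟨n-1, by omega⟩ := by
  rw [List.getLast?_eq_getElem?, List.getElem?_eq_getElem (by simp; omega)]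
  simp [List.getElem_finRange]

lemma chain'_flatMap {α β : Type*} {R : β → β → Prop} (f : α → List β) :
    ∀ (l : List α), (∀ a ∈ l, (f a).Chain' R) → (∀ a ∈ l, f a ≠ []) →
    l.Chain' (fun a a' => ∀ x ∈ (f a).getLast?, ∀ y ∈ (f a').head?, R x y) →
    (l.flatMap f).Chain' R := by
  intro l
  induction l with
  | nil => intro _ _ _; exact List.isChain_nil
  | cons a t ih =>
    intro h1 hne h2
    rw [flatMap_cons]
    refine List.IsChain.append (h1 a (by simp))
      (ih (fun x hx => h1 x (by simp [hx])) (fun x hx => hne x (by simp [hx]))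
        ((List.isChain_cons.mp h2).2)) ?_
    intro x hx y hy
    cases t with
    | nil => simp at hy
    | cons b t' =>
      rw [flatMap_cons, head?_append] at hy
      have hfb := hne b (by simp)
      cases hfb' : f b with
      | nil => exact absurd hfb' hfb
      | cons z zs =>
        rw [hfb'] at hy
        exact (List.isChain_cons_cons.mp h2).1 x hx y (by rw [hfb']; exact hy)

lemma head?_flatMap {α β : Type*} (f : α → List β) (l : List α)
    (hne : ∀ a ∈ l, f a ≠ []) (hl : l ≠ []) :
    (l.flatMap f).head? = (f (l.head hl)).head? := by
  cases l with
  | nil => simp at hl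
  | cons a t =>
    rw [flatMap_cons, head?_append]
    have := hne a (by simp)
    cases hfa : f a with
    | nil => exact absurd hfa this
    | cons z zs => rw [List.head_cons, hfa]; rfl

lemma getLast?_flatMap {α β : Type*} (f : α → List β) :
    ∀ (l : List α) (hne : ∀ a ∈ l, f a ≠ []) (hl : l ≠ []),
    (l.flatMap f).getLast? = (f (l.getLast hl)).getLast? := by
  intro l
  induction l with
  | nil => intro _ hl; simp at hl
  | cons a t ih =>
    intro hne _
    cases t with
    | nil => simp
    | cons b t' =>
      rw [flatMap_cons, List.getLast?_append, List.getLast_cons (by simp),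
        ← ih (fun x hx => hne x (by simp [hx])) (by simp)]
      have hfb : (b :: t').flatMap f ≠ [] := by
        rw [flatMap_cons]
        have hb := hne b (by simp)
        intro hcontra
        exact hb (List.append_eq_nil_iff.mp hcontra).1
      cases hopt : ((b :: t').flatMap f).getLast? with
      | none => exact absurd (List.getLast?_eq_none_iff.mp hopt) hfb
      | some z => rfl

lemma chain'_le_getLast : ∀ (l : List ℕ), l.Chain' (fun a b => b ≤ a + 1) →
    ∀ x ∈ l.head?, ∀ y ∈ l.getLast?, y ≤ x + (l.length - 1)
  | [] => by simp
  | [a] => by simp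
  | a :: b :: t => by
    intro h x hx y hy
    have h' := List.isChain_cons_cons.mp h
    have := chain'_le_getLast (b :: t) h'.2 b (by simp) y
      (by rwa [List.getLast?_cons_cons] at hy)
    simp only [head?_cons, Option.mem_def, Option.some.injEq] at hx
    subst hx
    simp only [length_cons] at this ⊢
    omega

end GenListAux
section GenListAux2
open List

lemma finRange_ne_nil {n : ℕ} (h : 0 < n) : List.finRange n ≠ [] := by
  intro e
  have := congrArg List.length e
  simp at this
  omega

lemma head?_flatMap' {α β : Type*} (f : α → List β) (l : List α) (a : α)
    (h : l.head? = some a) (hne : ∀ x ∈ l, f x ≠ []) :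
    (l.flatMap f).head? = (f a).head? := by
  have hl : l ≠ [] := by intro e; subst e; simp at h
  rw [head?_flatMap f l hne hl]
  have e : l.head hl = a := Option.some.inj (by rw [← List.head?_eq_head hl]; exact h)
  rw [e]

lemma getLast?_flatMap' {α β : Type*} (f : α → List β) (l : List α) (a : α)
    (h : l.getLast? = some a) (hne : ∀ x ∈ l, f x ≠ []) :
    (l.flatMap f).getLast? = (f a).getLast? := by
  have hl : l ≠ [] := by intro e; subst e; simp at h
  rw [getLast?_flatMap f l hne hl]
  have e : l.getLast hl = a := Option.some.inj (by rw [← List.getLast?_eq_getLast hl]; exact h)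
  rw [e]

end GenListAux2

namespace UVertAux
open List

section costlemmas
variable {V : Type*} [DecidableEq V]

lemma cost_two_le (cost : V → ℕ) (hc : ∀ v, 1 ≤ cost v) (p : List V) (a b : V)
    (ha : a ∈ p) (hb : b ∈ p) (hab : a ≠ b) :
    cost a + cost b + (p.length - 2) ≤ pathCost cost p := by
  have h1 : p ~ a :: p.erase a := perm_cons_erase ha
  have hb' : b ∈ p.erase a := (List.mem_erase_of_ne (Ne.symm hab)).mpr hb
  have h2 : p.erase a ~ b :: (p.erase a).erase b := perm_cons_erase hb'
  have hsum : pathCost cost p = cost a + (cost b + pathCost cost ((p.erase a).erase b)) := by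
    unfold pathCost
    rw [(h1.map cost).sum_eq]
    simp only [map_cons, sum_cons]
    rw [(h2.map cost).sum_eq]
    simp
  have hlen1 : (p.erase a).length = p.length - 1 := List.length_erase_of_mem ha
  have hlen2 : ((p.erase a).erase b).length = p.length - 2 := by
    rw [List.length_erase_of_mem hb', hlen1]
    omega
  have hrest : p.length - 2 ≤ pathCost cost ((p.erase a).erase b) := by
    rw [← hlen2]
    calc ((p.erase a).erase b).length = (((p.erase a).erase b).map cost).length := by simp
    _ ≤ (((p.erase a).erase b).map cost).sum :=
        length_le_sum _ (by intro x hx; simp at hx; obtain ⟨y, _, rfl⟩ := hx; exact hc y)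
    _ = pathCost cost ((p.erase a).erase b) := rfl
  omega

lemma cost_three_le (cost : V → ℕ) (p : List V) (a b c : V)
    (ha : a ∈ p) (hb : b ∈ p) (hc : c ∈ p) (hab : a ≠ b) (hac : a ≠ c) (hbc : b ≠ c) :
    cost a + cost b + cost c ≤ pathCost cost p := by
  have h1 : p ~ a :: p.erase a := perm_cons_erase ha
  have hb' : b ∈ p.erase a := (List.mem_erase_of_ne (Ne.symm hab)).mpr hb
  have h2 : p.erase a ~ b :: (p.erase a).erase b := perm_cons_erase hb'
  have hc' : c ∈ (p.erase a).erase b :=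
    (List.mem_erase_of_ne (Ne.symm hbc)).mpr ((List.mem_erase_of_ne (Ne.symm hac)).mpr hc)
  have h3 : (p.erase a).erase b ~ c :: ((p.erase a).erase b).erase c := perm_cons_erase hc'
  have hsum : pathCost cost p
      = cost a + (cost b + (cost c + pathCost cost (((p.erase a).erase b).erase c))) := by
    unfold pathCost
    rw [(h1.map cost).sum_eq]
    simp only [map_cons, sum_cons]
    rw [(h2.map cost).sum_eq]
    simp only [map_cons, sum_cons]
    rw [(h3.map cost).sum_eq]
    simp
  omega

end costlemmas

section domain
open List
variable {k N : ℕ} (G : SimpleGraph (Fin N)) [DecidableRel G.Adj]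

/-- height -/
def hgt (k N : ℕ) : DVertV k N → ℕ
  | .gridH _ j _ ℓ => j * N + ℓ + 1
  | .gridV _ j _ ℓ => j * N + ℓ + 1
  | .a _ => 0
  | .b _ => k * N + 1
  | .c _ => 0
  | .d _ => 0

/-- width -/
def wdt (k N : ℕ) : DVertV k N → ℕ
  | .gridH i _ q _ => i * N + q + 1
  | .gridV i _ q _ => i * N + q + 1
  | .c _ => 0
  | .d _ => k * N + 1
  | .a _ => 0
  | .b _ => 0

lemma hgt_vNode (i j : Fin k) (q ℓ : Fin N) :
    hgt k N (vNode G i j q ℓ) = j * N + ℓ + 1 := by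
  unfold vNode; split <;> rfl

lemma wdt_vNode (i j : Fin k) (q ℓ : Fin N) :
    wdt k N (vNode G i j q ℓ) = i * N + q + 1 := by
  unfold vNode; split <;> rfl

lemma vNode_inj {i i' j j' : Fin k} {q q' ℓ ℓ' : Fin N}
    (h : vNode G i j q ℓ = vNode G i' j' q' ℓ') : i = i' ∧ j = j' ∧ q = q' ∧ ℓ = ℓ' := by
  unfold vNode at h
  split at h <;> split at h <;> simp_all

lemma vNode_ne_a (i i' : Fin k) (j : Fin k) (q ℓ : Fin N) :
    vNode G i j q ℓ ≠ DVertV.a i' := by unfold vNode; split <;> simp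

lemma vNode_ne_b (i i' : Fin k) (j : Fin k) (q ℓ : Fin N) :
    vNode G i j q ℓ ≠ DVertV.b i' := by unfold vNode; split <;> simp

lemma vNode_ne_c (i j' : Fin k) (j : Fin k) (q ℓ : Fin N) :
    vNode G i j q ℓ ≠ DVertV.c j' := by unfold vNode; split <;> simp

lemma vNode_ne_d (i j' : Fin k) (j : Fin k) (q ℓ : Fin N) :
    vNode G i j q ℓ ≠ DVertV.d j' := by unfold vNode; split <;> simp

lemma mul_succ_helper {a b n : ℕ} (h : a + 1 = b) : b * n = a * n + n := by
  subst h; ring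

lemma one_le_costVert (hk : 1 ≤ k) (hN : 1 ≤ N) (v : DVertV k N) :
    1 ≤ costVert k N v := by
  cases v <;> simp [costVert] <;>
    exact Nat.mul_pos (Nat.mul_pos (by omega) hk) hN

/-- Height step lemma. -/
lemma hgt_step {u v : DVertV k N} (h : DVertE k N G u v)
    (hu : ∀ j', u ≠ DVertV.c j' ∧ u ≠ DVertV.d j')
    (hv : ∀ j', v ≠ DVertV.c j' ∧ v ≠ DVertV.d j') :
    hgt k N v ≤ hgt k N u + 1 ∧ hgt k N u ≤ hgt k N v + 1 := by
  cases h with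
  | up i j q ℓ ℓ' h => rw [hgt_vNode, hgt_vNode]; omega
  | right i j q q' ℓ h => simp [hgt]
  | hmatch i i' j q q' ℓ hi hq hq' => simp [hgt]
  | vmatch i j j' q ℓ ℓ' hj hl hl' =>
      have e : (j' : ℕ) * N = (j : ℕ) * N + N := by rw [hj]; ring
      rw [hgt_vNode, hgt_vNode]; omega
  | srcA i j q ℓ hj hl =>
      rw [hgt_vNode]
      have e : (j : ℕ) * N = 0 := by rw [hj]; ring
      have : hgt k N (DVertV.a i) = 0 := rfl
      omega
  | snkB i j q ℓ hj hl =>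
      rw [hgt_vNode]
      have e := mul_succ_helper (n := N) hj
      have : hgt k N (DVertV.b i) = k * N + 1 := rfl
      omega
  | srcC i j q ℓ _ _ => exact absurd rfl (hu j).1
  | snkD i j q ℓ _ _ => exact absurd rfl (hv j).2

/-- Width step lemma. -/
lemma wdt_step {u v : DVertV k N} (h : DVertE k N G u v)
    (hu : ∀ i', u ≠ DVertV.a i' ∧ u ≠ DVertV.b i')
    (hv : ∀ i', v ≠ DVertV.a i' ∧ v ≠ DVertV.b i') :
    wdt k N v ≤ wdt k N u + 1 ∧ wdt k N u ≤ wdt k N v + 1 := by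
  cases h with
  | up i j q ℓ ℓ' h => rw [wdt_vNode, wdt_vNode]; omega
  | right i j q q' ℓ h => simp [wdt]; omega
  | hmatch i i' j q q' ℓ hi hq hq' =>
      have e : (i' : ℕ) * N = (i : ℕ) * N + N := by rw [hi]; ring
      simp [wdt]; omega
  | vmatch i j j' q ℓ ℓ' hj hl hl' => rw [wdt_vNode, wdt_vNode]; omega
  | srcA i j q ℓ hj hl => exact absurd rfl (hu i).1
  | snkB i j q ℓ hj hl => exact absurd rfl (hv i).2
  | srcC i j q ℓ hi hq =>
      have : wdt k N (DVertV.c j) = 0 := rfl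
      simp [wdt]; omega
  | snkD i j q ℓ hi hq =>
      have e := mul_succ_helper (n := N) hi
      have : wdt k N (DVertV.d j) = k * N + 1 := rfl
      simp [wdt]; omega

end domain

section canon
open List
variable {k N : ℕ}

lemma chain'_canon {α : Type*} (R : α → α → Prop) (hk : 0 < k) (hN : 0 < N)
    (g : Fin k → Fin N → α) (s t : α)
    (h1 : ∀ (i : Fin k) (q q' : Fin N), (q' : ℕ) = (q : ℕ) + 1 → R (g i q) (g i q'))
    (h2 : ∀ (i i' : Fin k), (i' : ℕ) = (i : ℕ) + 1 →
      R (g i ⟨N-1, by omega⟩) (g i' ⟨0, hN⟩))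
    (h3 : R s (g ⟨0, hk⟩ ⟨0, hN⟩))
    (h4 : R (g ⟨k-1, by omega⟩ ⟨N-1, by omega⟩) t) :
    (s :: (((List.finRange k).flatMap fun i => (List.finRange N).map (g i)) ++ [t])).Chain'
      R := by
  set L := (List.finRange k).flatMap fun i => (List.finRange N).map (g i) with hL
  have hne : ∀ i : Fin k, (List.finRange N).map (g i) ≠ [] := by
    intro i h
    have := congrArg List.length h
    simp at this
    omega
  have hbh : ∀ i : Fin k, ((List.finRange N).map (g i)).head? = some (g i ⟨0, hN⟩) := by
    intro i; rw [head?_map, head?_finRange hN]; rfl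
  have hbl : ∀ i : Fin k,
      ((List.finRange N).map (g i)).getLast? = some (g i ⟨N-1, by omega⟩) := by
    intro i; rw [getLast?_map, getLast?_finRange hN]; rfl
  have hheadL : L.head? = some (g ⟨0, hk⟩ ⟨0, hN⟩) := by
    rw [hL, head?_flatMap' _ _ _ (head?_finRange hk) (fun i _ => hne i), hbh]
  have hlastL : L.getLast? = some (g ⟨k-1, by omega⟩ ⟨N-1, by omega⟩) := by
    rw [hL, getLast?_flatMap' _ _ _ (getLast?_finRange hk) (fun i _ => hne i), hbl]
  have hchainL : L.Chain' R := by
    apply chain'_flatMap _ _ (fun i _ => (by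
      simp only [List.Chain']; rw [isChain_map]
      exact chain'_finRange _ (fun a ha0 ha1 => h1 i ⟨a, ha0⟩ ⟨a+1, ha1⟩ rfl)))
      (fun i _ => hne i)
    apply chain'_finRange
    intro a ha0 ha1 x hx y hy
    rw [hbl] at hx
    rw [hbh] at hy
    have hx' : some (g ⟨a, ha0⟩ ⟨N-1, by omega⟩) = some x := hx
    have hy' : some (g ⟨a+1, ha1⟩ ⟨0, hN⟩) = some y := hy
    cases Option.some.inj hx'
    cases Option.some.inj hy'
    exact h2 ⟨a, ha0⟩ ⟨a+1, ha1⟩ rfl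
  simp only [List.Chain']; rw [List.isChain_cons]
  constructor
  · intro y hy
    rw [head?_append, hheadL] at hy
    have : some (g ⟨0, hk⟩ ⟨0, hN⟩) = some y := hy
    cases Option.some.inj this
    exact h3
  · refine List.IsChain.append hchainL (List.isChain_singleton t) ?_
    intro x hx y hy
    rw [hlastL] at hx
    have hx' : g ⟨k-1, by omega⟩ ⟨N-1, by omega⟩ = x := Option.some.inj hx
    have hy' : t = y := Option.some.inj hy
    subst hx'; subst hy'
    exact h4

lemma length_canonL {α : Type*} (g : Fin k → Fin N → α) :
    ((List.finRange k).flatMap fun i => (List.finRange N).map (g i)).length = k * N := by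
  rw [List.length_flatMap]
  show (List.map (fun i => ((List.finRange N).map (g i)).length) (List.finRange k)).sum = k * N
  simp [List.map_const']

lemma nodup_canonL {α : Type*} (g : Fin k → Fin N → α)
    (hinj : ∀ i i' q q', g i q = g i' q' → i = i' ∧ q = q') :
    ((List.finRange k).flatMap fun i => (List.finRange N).map (g i)).Nodup := by
  rw [List.nodup_flatMap]
  constructor
  · intro i _
    exact (List.nodup_finRange N).map_on
      (fun q _ q' _ h => ((hinj i i q q') h).2)
  · apply List.Nodup.pairwise_of_forall_ne (List.nodup_finRange k)
    intro i _ i' _ hii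
    intro x hx hx'
    simp only [List.mem_map] at hx hx'
    obtain ⟨q, _, rfl⟩ := hx
    obtain ⟨q', _, h⟩ := hx'
    exact hii ((hinj i' i q' q h).1).symm

lemma mem_canonL {α : Type*} (g : Fin k → Fin N → α) (v : α) :
    v ∈ ((List.finRange k).flatMap fun i => (List.finRange N).map (g i)) ↔
      ∃ i q, g i q = v := by
  simp only [List.mem_flatMap, List.mem_map, List.mem_finRange, true_and]

end canon

section paths
open List
variable {k N : ℕ} (G : SimpleGraph (Fin N)) [DecidableRel G.Adj]

lemma map_chain'_le {V : Type*} (f : V → ℕ) (R : V → V → Prop) (p : List V)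
    (h : p.Chain' R)
    (hstep : ∀ u v, u ∈ p → v ∈ p → R u v → f v ≤ f u + 1) :
    (p.map f).Chain' (fun a b => b ≤ a + 1) := by
  simp only [List.Chain']; rw [List.isChain_map, List.isChain_iff_getElem]
  simp only [List.Chain'] at h; rw [List.isChain_iff_getElem] at h
  intro i hi
  exact hstep _ _ (List.getElem_mem ..) (List.getElem_mem ..) (h i hi)

lemma isPathList_canonH (hN : 1 ≤ N) (hk : 1 ≤ k) (j : Fin k) (r : Fin N) :
    IsPathList (UAdj (DVertE k N G)) (DVertV.c j) (DVertV.d j) (canonVertH k N j r) := by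
  have hk' : 0 < k := hk
  have hN' : 0 < N := hN
  constructor
  · -- chain
    exact chain'_canon (UAdj (DVertE k N G)) hk' hN'
      (fun i q => DVertV.gridH i j q r) _ _
      (fun i q q' h => Or.inl (DVertE.right i j q q' r h))
      (fun i i' h => Or.inl (DVertE.hmatch i i' j _ _ r h (by simp; omega) rfl))
      (Or.inl (DVertE.srcC ⟨0, hk'⟩ j ⟨0, hN'⟩ r rfl rfl))
      (Or.inl (DVertE.snkD ⟨k-1, by omega⟩ j ⟨N-1, by omega⟩ r (by simp; omega)
        (by simp; omega)))
  · -- nodup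
    rw [canonVertH, List.nodup_cons, List.nodup_append]
    refine ⟨?_, nodup_canonL _ (by intro i i' q q' h; simp at h; exact ⟨h.1, h.2⟩),
      by simp, ?_⟩
    · intro hmem
      rcases List.mem_append.mp hmem with h | h
      · rw [mem_canonL] at h; obtain ⟨_, _, h⟩ := h; simp at h
      · simp at h
    · intro x hx hx'
      rw [mem_canonL] at hx
      obtain ⟨_, _, rfl⟩ := hx
      intro hb; simp at hb; subst hb; simp
  · rfl
  · rw [canonVertH, show (DVertV.c j :: (((List.finRange k).flatMap fun i =>
        (List.finRange N).map fun q => DVertV.gridH i j q r) ++ [DVertV.d j]))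
      = (DVertV.c j :: ((List.finRange k).flatMap fun i =>
        (List.finRange N).map fun q => DVertV.gridH i j q r)) ++ [DVertV.d j] from rfl,
      List.getLast?_concat]

lemma isPathList_canonV (hN : 1 ≤ N) (hk : 1 ≤ k) (i : Fin k) (r : Fin N) :
    IsPathList (UAdj (DVertE k N G)) (DVertV.a i) (DVertV.b i) (canonVertV G i r) := by
  have hk' : 0 < k := hk
  have hN' : 0 < N := hN
  constructor
  · exact chain'_canon (UAdj (DVertE k N G)) hk' hN'
      (fun j ℓ => vNode G i j r ℓ) _ _
      (fun j ℓ ℓ' h => Or.inl (DVertE.up i j r ℓ ℓ' h))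
      (fun j j' h => Or.inl (DVertE.vmatch i j j' r _ _ h (by simp; omega) rfl))
      (Or.inl (DVertE.srcA i ⟨0, hk'⟩ r ⟨0, hN'⟩ rfl rfl))
      (Or.inl (DVertE.snkB i ⟨k-1, by omega⟩ r ⟨N-1, by omega⟩ (by simp; omega)
        (by simp; omega)))
  · rw [canonVertV, List.nodup_cons, List.nodup_append]
    refine ⟨?_, nodup_canonL _ (by
        intro j j' ℓ ℓ' h
        have := vNode_inj G h
        exact ⟨this.2.1, this.2.2.2⟩),
      by simp, ?_⟩
    · intro hmem
      rcases List.mem_append.mp hmem with h | h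
      · rw [mem_canonL] at h; obtain ⟨j', ℓ', h⟩ := h; exact vNode_ne_a G i i j' r ℓ' h
      · simp at h
    · intro x hx hx'
      rw [mem_canonL] at hx
      obtain ⟨j', ℓ', rfl⟩ := hx
      intro hb; simp at hb; subst hb
      exact vNode_ne_b G i i j' r ℓ'
  · rfl
  · rw [canonVertV, show (DVertV.a i :: (((List.finRange k).flatMap fun j =>
        (List.finRange N).map fun ℓ => vNode G i j r ℓ) ++ [DVertV.b i]))
      = (DVertV.a i :: ((List.finRange k).flatMap fun j =>
        (List.finRange N).map fun ℓ => vNode G i j r ℓ)) ++ [DVertV.b i] from rfl,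
      List.getLast?_concat]

lemma cost_canonH (j : Fin k) (r : Fin N) :
    pathCost (costVert k N) (canonVertH k N j r) = 5 * (k * N) := by
  rw [canonVertH]
  unfold pathCost
  rw [List.map_cons, List.map_append, List.sum_cons, List.sum_append]
  rw [sum_map_of_one _ _ (by
    intro x hx
    rw [mem_canonL] at hx
    obtain ⟨i', q', h⟩ := hx
    rw [← h]; rfl)]
  rw [length_canonL]
  show 2*k*N + (k*N + (2*k*N + 0)) = 5*(k*N)
  ring

lemma cost_canonV (i : Fin k) (r : Fin N) :
    pathCost (costVert k N) (canonVertV G i r) = 5 * (k * N) := by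
  rw [canonVertV]
  unfold pathCost
  rw [List.map_cons, List.map_append, List.sum_cons, List.sum_append]
  rw [sum_map_of_one _ _ (by
    intro x hx
    rw [mem_canonL] at hx
    obtain ⟨j', ℓ', h⟩ := hx
    rw [← h]
    show costVert k N (vNode G i j' r ℓ') = 1
    unfold vNode
    split <;> rfl)]
  rw [length_canonL]
  show 2*k*N + (k*N + (2*k*N + 0)) = 5*(k*N)
  ring

lemma lower_ab (hN : 1 ≤ N) (hk : 1 ≤ k) (i : Fin k) (p : List (DVertV k N))
    (hp : IsPathList (UAdj (DVertE k N G)) (DVertV.a i) (DVertV.b i) p) :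
    5 * (k * N) ≤ pathCost (costVert k N) p := by
  have ha : DVertV.a i ∈ p := List.mem_of_mem_head? (by rw [hp.head]; rfl)
  have hb : DVertV.b i ∈ p := List.mem_of_mem_getLast? (by rw [hp.last]; rfl)
  by_cases hcd : ∃ v ∈ p, ∃ j' : Fin k, v = DVertV.c j' ∨ v = DVertV.d j'
  · obtain ⟨v, hv, j', hvj⟩ := hcd
    have h3 := cost_three_le (costVert k N) p _ _ v ha hb hv (by simp)
      (by rcases hvj with rfl | rfl <;> simp) (by rcases hvj with rfl | rfl <;> simp)
    have hcv : costVert k N v = 2*k*N := by rcases hvj with rfl | rfl <;> rfl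
    have hca : costVert k N (DVertV.a i) = 2*k*N := rfl
    have hcb : costVert k N (DVertV.b i) = 2*k*N := rfl
    rw [hcv, hca, hcb] at h3
    have h6 : 2*k*N + 2*k*N + 2*k*N = 6*(k*N) := by ring
    have h56 : 5*(k*N) ≤ 6*(k*N) := Nat.mul_le_mul_right _ (by omega)
    omega
  · push_neg at hcd
    have hch := map_chain'_le (hgt k N) _ p hp.chain (by
      intro u v hu hv huv
      rcases huv with h | h
      · exact (hgt_step G h (hcd u hu) (hcd v hv)).1
      · exact (hgt_step G h (hcd v hv) (hcd u hu)).2)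
    have hlen := chain'_le_getLast _ hch (hgt k N (DVertV.a i))
      (by rw [List.head?_map, hp.head]; rfl)
      (hgt k N (DVertV.b i))
      (by rw [List.getLast?_map, hp.last]; rfl)
    have hga : hgt k N (DVertV.a i) = 0 := rfl
    have hgb : hgt k N (DVertV.b i) = k*N + 1 := rfl
    rw [List.length_map, hga, hgb] at hlen
    have h2 := cost_two_le (costVert k N) (one_le_costVert hk hN) p _ _ ha hb (by simp)
    have hca : costVert k N (DVertV.a i) = 2*(k*N) := by show 2*k*N = 2*(k*N); ring
    have hcb : costVert k N (DVertV.b i) = 2*(k*N) := by show 2*k*N = 2*(k*N); ring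
    rw [hca, hcb] at h2
    obtain ⟨m, hm⟩ : ∃ m, k*N = m := ⟨_, rfl⟩
    rw [hm] at hlen h2 ⊢
    omega

lemma lower_cd (hN : 1 ≤ N) (hk : 1 ≤ k) (j : Fin k) (p : List (DVertV k N))
    (hp : IsPathList (UAdj (DVertE k N G)) (DVertV.c j) (DVertV.d j) p) :
    5 * (k * N) ≤ pathCost (costVert k N) p := by
  have ha : DVertV.c j ∈ p := List.mem_of_mem_head? (by rw [hp.head]; rfl)
  have hb : DVertV.d j ∈ p := List.mem_of_mem_getLast? (by rw [hp.last]; rfl)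
  by_cases hcd : ∃ v ∈ p, ∃ i' : Fin k, v = DVertV.a i' ∨ v = DVertV.b i'
  · obtain ⟨v, hv, i', hvj⟩ := hcd
    have h3 := cost_three_le (costVert k N) p _ _ v ha hb hv (by simp)
      (by rcases hvj with rfl | rfl <;> simp) (by rcases hvj with rfl | rfl <;> simp)
    have hcv : costVert k N v = 2*k*N := by rcases hvj with rfl | rfl <;> rfl
    have hca : costVert k N (DVertV.c j) = 2*k*N := rfl
    have hcb : costVert k N (DVertV.d j) = 2*k*N := rfl
    rw [hcv, hca, hcb] at h3
    have h6 : 2*k*N + 2*k*N + 2*k*N = 6*(k*N) := by ring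
    have h56 : 5*(k*N) ≤ 6*(k*N) := Nat.mul_le_mul_right _ (by omega)
    omega
  · push_neg at hcd
    have hch := map_chain'_le (wdt k N) _ p hp.chain (by
      intro u v hu hv huv
      rcases huv with h | h
      · exact (wdt_step G h (hcd u hu) (hcd v hv)).1
      · exact (wdt_step G h (hcd v hv) (hcd u hu)).2)
    have hlen := chain'_le_getLast _ hch (wdt k N (DVertV.c j))
      (by rw [List.head?_map, hp.head]; rfl)
      (wdt k N (DVertV.d j))
      (by rw [List.getLast?_map, hp.last]; rfl)
    have hga : wdt k N (DVertV.c j) = 0 := rfl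
    have hgb : wdt k N (DVertV.d j) = k*N + 1 := rfl
    rw [List.length_map, hga, hgb] at hlen
    have h2 := cost_two_le (costVert k N) (one_le_costVert hk hN) p _ _ ha hb (by simp)
    have hca : costVert k N (DVertV.c j) = 2*(k*N) := by show 2*k*N = 2*(k*N); ring
    have hcb : costVert k N (DVertV.d j) = 2*(k*N) := by show 2*k*N = 2*(k*N); ring
    rw [hca, hcb] at h2
    obtain ⟨m, hm⟩ : ∃ m, k*N = m := ⟨_, rfl⟩
    rw [hm] at hlen h2 ⊢
    omega

end paths

end UVertAux

open UVertAux

/-- if `G` contains a clique `{v_{γ_1},…,v_{γ_k}}` of size `k` (`k`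
distinct, pairwise adjacent vertices), then the `2k` paths
`Canonical_vertex(γ_i; a_i–b_i)` (`i ∈ [k]`) and `Canonical_vertex(γ_j; c_j–d_j)`
(`j ∈ [k]`) are pairwise vertex-disjoint and each is a shortest (minimum-cost) path in
`U_vertex` between its terminal pair: all `2k` terminal pairs of `(U_vertex, T)` are
simultaneously satisfied. -/
theorem UVert_completeness (N k : ℕ) (hN : 1 ≤ N) (hk : 1 ≤ k)
    (G : SimpleGraph (Fin N)) [DecidableRel G.Adj]
    (γ : Fin k → Fin N) (hinj : Function.Injective γ)
    (hadj : ∀ i i' : Fin k, i ≠ i' → G.Adj (γ i) (γ i')) :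
    (∀ i : Fin k,
      IsShortestCostPath (DVertE k N G) (costVert k N) (DVertV.a i) (DVertV.b i)
        (canonVertV G i (γ i))) ∧
    (∀ j : Fin k,
      IsShortestCostPath (DVertE k N G) (costVert k N) (DVertV.c j) (DVertV.d j)
        (canonVertH k N j (γ j))) ∧
    (∀ i i' : Fin k, i ≠ i' →
      VertDisj (canonVertV G i (γ i)) (canonVertV G i' (γ i'))) ∧
    (∀ j j' : Fin k, j ≠ j' →
      VertDisj (canonVertH k N j (γ j)) (canonVertH k N j' (γ j'))) ∧
    (∀ i j : Fin k, VertDisj (canonVertV G i (γ i)) (canonVertH k N j (γ j))) := by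
  have key : ∀ (i j : Fin k) (j1 : Fin k) (ℓ1 : Fin N) (i2 : Fin k) (q2 : Fin N),
      vNode G i j1 (γ i) ℓ1 ≠ DVertV.gridH i2 j q2 (γ j) := by
    intro i j j1 ℓ1 i2 q2
    unfold vNode
    split
    · simp
    · rename_i hns
      intro h
      simp only [DVertV.gridH.injEq] at h
      obtain ⟨h1, h2, h3, h4⟩ := h
      apply hns
      rw [h2, h4]
      by_cases hij : i = j
      · exact Or.inl ⟨hij, congrArg γ hij⟩
      · exact Or.inr ⟨hij, hadj i j hij⟩
  refine ⟨?_, ?_, ?_, ?_, ?_⟩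
  · intro i
    exact ⟨isPathList_canonV G hN hk i (γ i), fun q hq => by
      rw [cost_canonV]; exact lower_ab G hN hk i q hq⟩
  · intro j
    exact ⟨isPathList_canonH G hN hk j (γ j), fun q hq => by
      rw [cost_canonH]; exact lower_cd G hN hk j q hq⟩
  · intro i i' hii v hv hv'
    simp only [canonVertV, List.mem_cons, List.mem_append, List.mem_flatMap,
      List.mem_map, List.mem_finRange, true_and, List.mem_singleton,
      List.not_mem_nil, or_false] at hv hv'
    rcases hv with rfl | ⟨j1, ℓ1, rfl⟩ | rfl
    · rcases hv' with h | ⟨j2, ℓ2, h⟩ | h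
      · exact hii (by injection h)
      · exact vNode_ne_a G i' i j2 (γ i') ℓ2 h
      · simp at h
    · rcases hv' with h | ⟨j2, ℓ2, h⟩ | h
      · exact vNode_ne_a G i i' j1 (γ i) ℓ1 h
      · exact hii ((vNode_inj G h).1).symm
      · exact vNode_ne_b G i i' j1 (γ i) ℓ1 h
    · rcases hv' with h | ⟨j2, ℓ2, h⟩ | h
      · simp at h
      · exact vNode_ne_b G i' i j2 (γ i') ℓ2 h
      · exact hii (by injection h)
  · intro j j' hjj v hv hv'
    simp only [canonVertH, List.mem_cons, List.mem_append, List.mem_flatMap,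
      List.mem_map, List.mem_finRange, true_and, List.mem_singleton,
      List.not_mem_nil, or_false] at hv hv'
    rcases hv with rfl | ⟨i1, q1, rfl⟩ | rfl
    · rcases hv' with h | ⟨i2, q2, h⟩ | h
      · exact hjj (by injection h)
      · simp at h
      · simp at h
    · rcases hv' with h | ⟨i2, q2, h⟩ | h
      · simp at h
      · simp only [DVertV.gridH.injEq] at h
        exact hjj h.2.1.symm
      · simp at h
    · rcases hv' with h | ⟨i2, q2, h⟩ | h
      · simp at h
      · simp at h
      · exact hjj (by injection h)
  · intro i j v hv hv'
    simp only [canonVertV, canonVertH, List.mem_cons, List.mem_append, List.mem_flatMap,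
      List.mem_map, List.mem_finRange, true_and, List.mem_singleton,
      List.not_mem_nil, or_false] at hv hv'
    rcases hv with rfl | ⟨j1, ℓ1, rfl⟩ | rfl
    · rcases hv' with h | ⟨i2, q2, h⟩ | h
      · simp at h
      · simp at h
      · simp at h
    · rcases hv' with h | ⟨i2, q2, h⟩ | h
      · exact vNode_ne_c G i j j1 (γ i) ℓ1 h
      · exact key i j j1 ℓ1 i2 q2 h.symm
      · exact vNode_ne_d G i j j1 (γ i) ℓ1 h
    · rcases hv' with h | ⟨i2, q2, h⟩ | h
      · simp at h
      · simp at h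
      · simp at h
end

section
/- Let 0 < ε ≤ 1/2. If there exists a collection P of pairwise vertex-disjoint paths in U_vertex such that for at least (1/2 + ε)·2k of the 2k terminal pairs (s,t) ∈ T the collection P contains a shortest (minimum-cost) s–t path, then G contains a clique of size at least 2εk. -/
/-- The source of the `x`-th terminal pair of `T`: `a_i` for `x = inl i`
(pair `(a_i, b_i)`), and `c_j` for `x = inr j` (pair `(c_j, d_j)`). -/
def vSrc {k N : ℕ} (x : Fin k ⊕ Fin k) : DVertV k N :=
  match x with
  | .inl i => DVertV.a i
  | .inr j => DVertV.c j

/-- The sink of the `x`-th terminal pair of `T`. -/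
def vDst {k N : ℕ} (x : Fin k ⊕ Fin k) : DVertV k N :=
  match x with
  | .inl i => DVertV.b i
  | .inr j => DVertV.d j
namespace UVSound

variable {k N : ℕ} (G : SimpleGraph (Fin N)) [DecidableRel G.Adj]

/-! ### Basic facts about grid vertices -/

def isGrid : DVertV k N → Prop
  | .gridH _ _ _ _ => True
  | .gridV _ _ _ _ => True
  | _ => False

/-- vertical level (for `a_i ⇝ b_i` paths) -/
def levV : DVertV k N → ℕ
  | .gridH _ j _ ℓ => (j : ℕ) * N + (ℓ : ℕ)
  | .gridV _ j _ ℓ => (j : ℕ) * N + (ℓ : ℕ)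
  | _ => 0

/-- horizontal level (for `c_j ⇝ d_j` paths) -/
def levH : DVertV k N → ℕ
  | .gridH i _ q _ => (i : ℕ) * N + (q : ℕ)
  | .gridV i _ q _ => (i : ℕ) * N + (q : ℕ)
  | _ => 0

lemma vNode_cases (i j : Fin k) (q ℓ : Fin N) :
    vNode G i j q ℓ = .gridV i j q ℓ ∨ vNode G i j q ℓ = .gridH i j q ℓ := by
  unfold vNode; split <;> simp

lemma vNode_inj {i i' j j' : Fin k} {q q' ℓ ℓ' : Fin N}
    (h : vNode G i j q ℓ = vNode G i' j' q' ℓ') :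
    i = i' ∧ j = j' ∧ q = q' ∧ ℓ = ℓ' := by
  unfold vNode at h; split at h <;> split at h <;> simp_all

@[simp] lemma isGrid_vNode (i j : Fin k) (q ℓ : Fin N) : isGrid (vNode G i j q ℓ) := by
  unfold vNode; split <;> trivial

@[simp] lemma levV_vNode (i j : Fin k) (q ℓ : Fin N) :
    levV (vNode G i j q ℓ) = (j : ℕ) * N + (ℓ : ℕ) := by
  unfold vNode; split <;> rfl

@[simp] lemma levH_vNode (i j : Fin k) (q ℓ : Fin N) :
    levH (vNode G i j q ℓ) = (i : ℕ) * N + (q : ℕ) := by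
  unfold vNode; split <;> rfl

@[simp] lemma vNode_ne_a (i j : Fin k) (q ℓ : Fin N) (i' : Fin k) :
    vNode G i j q ℓ ≠ .a i' := by rcases vNode_cases G i j q ℓ with h | h <;> simp [h]
@[simp] lemma vNode_ne_b (i j : Fin k) (q ℓ : Fin N) (i' : Fin k) :
    vNode G i j q ℓ ≠ .b i' := by rcases vNode_cases G i j q ℓ with h | h <;> simp [h]
@[simp] lemma vNode_ne_c (i j : Fin k) (q ℓ : Fin N) (i' : Fin k) :
    vNode G i j q ℓ ≠ .c i' := by rcases vNode_cases G i j q ℓ with h | h <;> simp [h]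
@[simp] lemma vNode_ne_d (i j : Fin k) (q ℓ : Fin N) (i' : Fin k) :
    vNode G i j q ℓ ≠ .d i' := by rcases vNode_cases G i j q ℓ with h | h <;> simp [h]
@[simp] lemma a_ne_vNode (i j : Fin k) (q ℓ : Fin N) (i' : Fin k) :
    DVertV.a i' ≠ vNode G i j q ℓ := (vNode_ne_a G i j q ℓ i').symm
@[simp] lemma b_ne_vNode (i j : Fin k) (q ℓ : Fin N) (i' : Fin k) :
    DVertV.b i' ≠ vNode G i j q ℓ := (vNode_ne_b G i j q ℓ i').symm
@[simp] lemma c_ne_vNode (i j : Fin k) (q ℓ : Fin N) (i' : Fin k) :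
    DVertV.c i' ≠ vNode G i j q ℓ := (vNode_ne_c G i j q ℓ i').symm
@[simp] lemma d_ne_vNode (i j : Fin k) (q ℓ : Fin N) (i' : Fin k) :
    DVertV.d i' ≠ vNode G i j q ℓ := (vNode_ne_d G i j q ℓ i').symm

/-! ### Edge shape analysis -/

lemma edge_shape {x y : DVertV k N} (h : DVertE k N G x y) :
    (∃ i j q ℓ ℓ', x = vNode G i j q ℓ ∧ y = vNode G i j q ℓ' ∧ (ℓ' : ℕ) = (ℓ : ℕ) + 1)
  ∨ (∃ i j q q' ℓ, x = .gridH i j q ℓ ∧ y = .gridH i j q' ℓ ∧ (q' : ℕ) = (q : ℕ) + 1)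
  ∨ (∃ i i' j q q' ℓ, x = .gridH i j q ℓ ∧ y = .gridH i' j q' ℓ ∧
      (i' : ℕ) = (i : ℕ) + 1 ∧ (q : ℕ) + 1 = N ∧ (q' : ℕ) = 0)
  ∨ (∃ i j j' q ℓ ℓ', x = vNode G i j q ℓ ∧ y = vNode G i j' q ℓ' ∧
      (j' : ℕ) = (j : ℕ) + 1 ∧ (ℓ : ℕ) + 1 = N ∧ (ℓ' : ℕ) = 0)
  ∨ (∃ i j q ℓ, x = .a i ∧ y = vNode G i j q ℓ ∧ (j : ℕ) = 0 ∧ (ℓ : ℕ) = 0)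
  ∨ (∃ i j q ℓ, x = vNode G i j q ℓ ∧ y = .b i ∧ (j : ℕ) + 1 = k ∧ (ℓ : ℕ) + 1 = N)
  ∨ (∃ i j q ℓ, x = .c j ∧ y = .gridH i j q ℓ ∧ (i : ℕ) = 0 ∧ (q : ℕ) = 0)
  ∨ (∃ i j q ℓ, x = .gridH i j q ℓ ∧ y = .d j ∧ (i : ℕ) + 1 = k ∧ (q : ℕ) + 1 = N) := by
  cases h with
  | up i j q ℓ ℓ' h => exact Or.inl ⟨i, j, q, ℓ, ℓ', rfl, rfl, h⟩
  | right i j q q' ℓ h => exact Or.inr (Or.inl ⟨i, j, q, q', ℓ, rfl, rfl, h⟩)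
  | hmatch i i' j q q' ℓ h1 h2 h3 =>
      exact Or.inr (Or.inr (Or.inl ⟨i, i', j, q, q', ℓ, rfl, rfl, h1, h2, h3⟩))
  | vmatch i j j' q ℓ ℓ' h1 h2 h3 =>
      exact Or.inr (Or.inr (Or.inr (Or.inl ⟨i, j, j', q, ℓ, ℓ', rfl, rfl, h1, h2, h3⟩)))
  | srcA i j q ℓ h1 h2 =>
      exact Or.inr (Or.inr (Or.inr (Or.inr (Or.inl ⟨i, j, q, ℓ, rfl, rfl, h1, h2⟩))))
  | snkB i j q ℓ h1 h2 =>
      exact Or.inr (Or.inr (Or.inr (Or.inr (Or.inr (Or.inl ⟨i, j, q, ℓ, rfl, rfl, h1, h2⟩)))))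
  | srcC i j q ℓ h1 h2 =>
      exact Or.inr (Or.inr (Or.inr (Or.inr (Or.inr (Or.inr (Or.inl ⟨i, j, q, ℓ, rfl, rfl, h1, h2⟩))))))
  | snkD i j q ℓ h1 h2 =>
      exact Or.inr (Or.inr (Or.inr (Or.inr (Or.inr (Or.inr (Or.inr ⟨i, j, q, ℓ, rfl, rfl, h1, h2⟩))))))






lemma fwdV {x y : DVertV k N} (h : DVertE k N G x y) (hx : isGrid x) (hy : isGrid y) :
    (∃ i j q ℓ j' ℓ', x = vNode G i j q ℓ ∧ y = vNode G i j' q ℓ' ∧ levV y = levV x + 1)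
    ∨ levV y = levV x := by
  rcases edge_shape G h with ⟨i,j,q,ℓ,ℓ',rfl,rfl,h1⟩ | ⟨i,j,q,q',ℓ,rfl,rfl,h1⟩ |
    ⟨i,i',j,q,q',ℓ,rfl,rfl,h1,h2,h3⟩ | ⟨i,j,j',q,ℓ,ℓ',rfl,rfl,h1,h2,h3⟩ |
    ⟨i,j,q,ℓ,rfl,rfl,h1,h2⟩ | ⟨i,j,q,ℓ,rfl,rfl,h1,h2⟩ |
    ⟨i,j,q,ℓ,rfl,rfl,h1,h2⟩ | ⟨i,j,q,ℓ,rfl,rfl,h1,h2⟩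
  · refine Or.inl ⟨i, j, q, ℓ, j, ℓ', rfl, rfl, ?_⟩
    rw [levV_vNode, levV_vNode, h1]
    omega
  · exact Or.inr rfl
  · exact Or.inr rfl
  · refine Or.inl ⟨i, j, q, ℓ, j', ℓ', rfl, rfl, ?_⟩
    rw [levV_vNode, levV_vNode, h1, h3, add_mul, one_mul]
    omega
  · simp [isGrid] at hx
  · simp [isGrid] at hy
  · simp [isGrid] at hx
  · simp [isGrid] at hy

lemma fwdH {x y : DVertV k N} (h : DVertE k N G x y) (hx : isGrid x) (hy : isGrid y) :
    (∃ i i' j q q' ℓ, x = .gridH i j q ℓ ∧ y = .gridH i' j q' ℓ ∧ levH y = levH x + 1)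
    ∨ levH y = levH x := by
  rcases edge_shape G h with ⟨i,j,q,ℓ,ℓ',rfl,rfl,h1⟩ | ⟨i,j,q,q',ℓ,rfl,rfl,h1⟩ |
    ⟨i,i',j,q,q',ℓ,rfl,rfl,h1,h2,h3⟩ | ⟨i,j,j',q,ℓ,ℓ',rfl,rfl,h1,h2,h3⟩ |
    ⟨i,j,q,ℓ,rfl,rfl,h1,h2⟩ | ⟨i,j,q,ℓ,rfl,rfl,h1,h2⟩ |
    ⟨i,j,q,ℓ,rfl,rfl,h1,h2⟩ | ⟨i,j,q,ℓ,rfl,rfl,h1,h2⟩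
  · exact Or.inr (by rw [levH_vNode, levH_vNode])
  · refine Or.inl ⟨i, i, j, q, q', ℓ, rfl, rfl, ?_⟩
    show (i : ℕ) * N + (q' : ℕ) = (i : ℕ) * N + (q : ℕ) + 1
    omega
  · refine Or.inl ⟨i, i', j, q, q', ℓ, rfl, rfl, ?_⟩
    show (i' : ℕ) * N + (q' : ℕ) = (i : ℕ) * N + (q : ℕ) + 1
    rw [h1, h3, add_mul, one_mul]
    omega
  · exact Or.inr (by rw [levH_vNode, levH_vNode])
  · simp [isGrid] at hx
  · simp [isGrid] at hy
  · simp [isGrid] at hx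
  · simp [isGrid] at hy

lemma levV_le {x y : DVertV k N} (hx : isGrid x) (hy : isGrid y)
    (h : UAdj (DVertE k N G) x y) : levV y ≤ levV x + 1 := by
  rcases h with h | h
  · rcases fwdV G h hx hy with ⟨_,_,_,_,_,_,_,_,h'⟩ | h' <;> omega
  · rcases fwdV G h hy hx with ⟨_,_,_,_,_,_,_,_,h'⟩ | h' <;> omega

lemma levH_le {x y : DVertV k N} (hx : isGrid x) (hy : isGrid y)
    (h : UAdj (DVertE k N G) x y) : levH y ≤ levH x + 1 := by
  rcases h with h | h
  · rcases fwdH G h hx hy with ⟨_,_,_,_,_,_,_,_,h'⟩ | h' <;> omega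
  · rcases fwdH G h hy hx with ⟨_,_,_,_,_,_,_,_,h'⟩ | h' <;> omega

lemma stepV {x y : DVertV k N} (hx : isGrid x) (hy : isGrid y)
    (h : UAdj (DVertE k N G) x y) (hl : levV y = levV x + 1) :
    ∃ i j q ℓ j' ℓ', x = vNode G i j q ℓ ∧ y = vNode G i j' q ℓ' := by
  rcases h with h | h
  · rcases fwdV G h hx hy with ⟨i,j,q,ℓ,j',ℓ',hx',hy',_⟩ | h'
    · exact ⟨i, j, q, ℓ, j', ℓ', hx', hy'⟩
    · omega
  · rcases fwdV G h hy hx with ⟨_,_,_,_,_,_,_,_,h'⟩ | h' <;> omega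

lemma stepH {x y : DVertV k N} (hx : isGrid x) (hy : isGrid y)
    (h : UAdj (DVertE k N G) x y) (hl : levH y = levH x + 1) :
    ∃ i i' j q q' ℓ, x = .gridH i j q ℓ ∧ y = .gridH i' j q' ℓ := by
  rcases h with h | h
  · rcases fwdH G h hx hy with ⟨i,i',j,q,q',ℓ,hx',hy',_⟩ | h'
    · exact ⟨i, i', j, q, q', ℓ, hx', hy'⟩
    · omega
  · rcases fwdH G h hy hx with ⟨_,_,_,_,_,_,_,_,h'⟩ | h' <;> omega


lemma invA {i : Fin k} {y : DVertV k N} (h : UAdj (DVertE k N G) (.a i) y) :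
    ∃ j q ℓ, y = vNode G i j q ℓ ∧ (j : ℕ) = 0 ∧ (ℓ : ℕ) = 0 := by
  rcases h with h | h
  · rcases edge_shape G h with ⟨i,j,q,ℓ,ℓ',hx,hy,h1⟩ | ⟨i,j,q,q',ℓ,hx,hy,h1⟩ |
      ⟨i,i',j,q,q',ℓ,hx,hy,h1,h2,h3⟩ | ⟨i,j,j',q,ℓ,ℓ',hx,hy,h1,h2,h3⟩ |
      ⟨i',j,q,ℓ,hx,hy,h1,h2⟩ | ⟨i,j,q,ℓ,hx,hy,h1,h2⟩ |
      ⟨i,j,q,ℓ,hx,hy,h1,h2⟩ | ⟨i,j,q,ℓ,hx,hy,h1,h2⟩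
    · simp at hx
    · simp at hx
    · simp at hx
    · simp at hx
    · injection hx with e; subst e; exact ⟨j, q, ℓ, hy, h1, h2⟩
    · simp at hx
    · simp at hx
    · simp at hx
  · rcases edge_shape G h with ⟨i,j,q,ℓ,ℓ',hx,hy,h1⟩ | ⟨i,j,q,q',ℓ,hx,hy,h1⟩ |
      ⟨i,i',j,q,q',ℓ,hx,hy,h1,h2,h3⟩ | ⟨i,j,j',q,ℓ,ℓ',hx,hy,h1,h2,h3⟩ |
      ⟨i',j,q,ℓ,hx,hy,h1,h2⟩ | ⟨i,j,q,ℓ,hx,hy,h1,h2⟩ |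
      ⟨i,j,q,ℓ,hx,hy,h1,h2⟩ | ⟨i,j,q,ℓ,hx,hy,h1,h2⟩ <;> simp at hy

lemma invB {i : Fin k} {x : DVertV k N} (h : UAdj (DVertE k N G) x (.b i)) :
    ∃ j q ℓ, x = vNode G i j q ℓ ∧ (j : ℕ) + 1 = k ∧ (ℓ : ℕ) + 1 = N := by
  rcases h with h | h
  · rcases edge_shape G h with ⟨i,j,q,ℓ,ℓ',hx,hy,h1⟩ | ⟨i,j,q,q',ℓ,hx,hy,h1⟩ |
      ⟨i,i',j,q,q',ℓ,hx,hy,h1,h2,h3⟩ | ⟨i,j,j',q,ℓ,ℓ',hx,hy,h1,h2,h3⟩ |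
      ⟨i',j,q,ℓ,hx,hy,h1,h2⟩ | ⟨i',j,q,ℓ,hx,hy,h1,h2⟩ |
      ⟨i,j,q,ℓ,hx,hy,h1,h2⟩ | ⟨i,j,q,ℓ,hx,hy,h1,h2⟩
    · simp at hy
    · simp at hy
    · simp at hy
    · simp at hy
    · simp at hy
    · injection hy with e; subst e; exact ⟨j, q, ℓ, hx, h1, h2⟩
    · simp at hy
    · simp at hy
  · rcases edge_shape G h with ⟨i,j,q,ℓ,ℓ',hx,hy,h1⟩ | ⟨i,j,q,q',ℓ,hx,hy,h1⟩ |
      ⟨i,i',j,q,q',ℓ,hx,hy,h1,h2,h3⟩ | ⟨i,j,j',q,ℓ,ℓ',hx,hy,h1,h2,h3⟩ |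
      ⟨i',j,q,ℓ,hx,hy,h1,h2⟩ | ⟨i,j,q,ℓ,hx,hy,h1,h2⟩ |
      ⟨i,j,q,ℓ,hx,hy,h1,h2⟩ | ⟨i,j,q,ℓ,hx,hy,h1,h2⟩ <;> simp at hx

lemma invC {j : Fin k} {y : DVertV k N} (h : UAdj (DVertE k N G) (.c j) y) :
    ∃ i q ℓ, y = .gridH i j q ℓ ∧ (i : ℕ) = 0 ∧ (q : ℕ) = 0 := by
  rcases h with h | h
  · rcases edge_shape G h with ⟨i,j,q,ℓ,ℓ',hx,hy,h1⟩ | ⟨i,j,q,q',ℓ,hx,hy,h1⟩ |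
      ⟨i,i',j,q,q',ℓ,hx,hy,h1,h2,h3⟩ | ⟨i,j,j',q,ℓ,ℓ',hx,hy,h1,h2,h3⟩ |
      ⟨i,j,q,ℓ,hx,hy,h1,h2⟩ | ⟨i,j,q,ℓ,hx,hy,h1,h2⟩ |
      ⟨i,j',q,ℓ,hx,hy,h1,h2⟩ | ⟨i,j,q,ℓ,hx,hy,h1,h2⟩
    · simp at hx
    · simp at hx
    · simp at hx
    · simp at hx
    · simp at hx
    · simp at hx
    · injection hx with e; subst e; exact ⟨i, q, ℓ, hy, h1, h2⟩
    · simp at hx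
  · rcases edge_shape G h with ⟨i,j,q,ℓ,ℓ',hx,hy,h1⟩ | ⟨i,j,q,q',ℓ,hx,hy,h1⟩ |
      ⟨i,i',j,q,q',ℓ,hx,hy,h1,h2,h3⟩ | ⟨i,j,j',q,ℓ,ℓ',hx,hy,h1,h2,h3⟩ |
      ⟨i,j,q,ℓ,hx,hy,h1,h2⟩ | ⟨i,j,q,ℓ,hx,hy,h1,h2⟩ |
      ⟨i,j',q,ℓ,hx,hy,h1,h2⟩ | ⟨i,j,q,ℓ,hx,hy,h1,h2⟩ <;> simp at hy

lemma invD {j : Fin k} {x : DVertV k N} (h : UAdj (DVertE k N G) x (.d j)) :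
    ∃ i q ℓ, x = .gridH i j q ℓ ∧ (i : ℕ) + 1 = k ∧ (q : ℕ) + 1 = N := by
  rcases h with h | h
  · rcases edge_shape G h with ⟨i,j,q,ℓ,ℓ',hx,hy,h1⟩ | ⟨i,j,q,q',ℓ,hx,hy,h1⟩ |
      ⟨i,i',j,q,q',ℓ,hx,hy,h1,h2,h3⟩ | ⟨i,j,j',q,ℓ,ℓ',hx,hy,h1,h2,h3⟩ |
      ⟨i,j,q,ℓ,hx,hy,h1,h2⟩ | ⟨i,j,q,ℓ,hx,hy,h1,h2⟩ |
      ⟨i,j,q,ℓ,hx,hy,h1,h2⟩ | ⟨i,j',q,ℓ,hx,hy,h1,h2⟩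
    · simp at hy
    · simp at hy
    · simp at hy
    · simp at hy
    · simp at hy
    · simp at hy
    · simp at hy
    · injection hy with e; subst e; exact ⟨i, q, ℓ, hx, h1, h2⟩
  · rcases edge_shape G h with ⟨i,j,q,ℓ,ℓ',hx,hy,h1⟩ | ⟨i,j,q,q',ℓ,hx,hy,h1⟩ |
      ⟨i,i',j,q,q',ℓ,hx,hy,h1,h2,h3⟩ | ⟨i,j,j',q,ℓ,ℓ',hx,hy,h1,h2,h3⟩ |
      ⟨i,j,q,ℓ,hx,hy,h1,h2⟩ | ⟨i,j,q,ℓ,hx,hy,h1,h2⟩ |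
      ⟨i,j',q,ℓ,hx,hy,h1,h2⟩ | ⟨i,j,q,ℓ,hx,hy,h1,h2⟩ <;> simp at hx






lemma levInj {j j' ℓ ℓ' : ℕ} (hl : ℓ < N) (hl' : ℓ' < N)
    (h : j * N + ℓ = j' * N + ℓ') : j = j' ∧ ℓ = ℓ' := by
  rcases lt_trichotomy j j' with hh | hh | hh
  · exfalso
    have h2 : (j + 1) * N ≤ j' * N := Nat.mul_le_mul (by omega) (le_refl N)
    rw [add_mul, one_mul] at h2
    omega
  · subst hh; omega
  · exfalso
    have h2 : (j' + 1) * N ≤ j * N := Nat.mul_le_mul (by omega) (le_refl N)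
    rw [add_mul, one_mul] at h2
    omega

lemma lowerV (i : Fin k) :
    ∀ g : List (DVertV k N), (∀ v ∈ g, isGrid v) →
      List.Chain' (UAdj (DVertE k N G)) (g ++ [.b i]) →
      ∀ v0, g.head? = some v0 → k * N ≤ g.length + levV v0 := by
  intro g
  induction g with
  | nil => intro _ _ v0 h; simp at h
  | cons v tail ih =>
    intro hg hchain v0 hv0
    have hv0' : v = v0 := by simpa using hv0
    subst hv0'
    cases tail with
    | nil =>
      have hadj : UAdj (DVertE k N G) v (.b i) := by
        have := List.isChain_pair.mp (show List.Chain' _ [_, _] by simpa using hchain)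
        exact this
      obtain ⟨j, q, ℓ, rfl, hj, hl⟩ := invB G hadj
      rw [levV_vNode]
      have h1 : ((j : ℕ) + 1) * N = k * N := by rw [hj]
      rw [add_mul, one_mul] at h1
      simp only [List.length_cons, List.length_nil]
      omega
    | cons w rest =>
      have hg' : ∀ x ∈ w :: rest, isGrid x := fun x hx => hg x (List.mem_cons_of_mem _ hx)
      have hchain' : List.Chain' (UAdj (DVertE k N G)) ((w :: rest) ++ [.b i]) := by
        simp only [List.cons_append] at hchain ⊢
        exact hchain.tail
      have hadj : UAdj (DVertE k N G) v w := by
        simp only [List.cons_append] at hchain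
        exact (List.isChain_cons_cons.mp hchain).1
      have hle := levV_le G (hg v (by simp)) (hg w (by simp)) hadj
      have hih := ih hg' hchain' w rfl
      simp only [List.length_cons] at hih ⊢
      omega

lemma lowerH (j : Fin k) :
    ∀ g : List (DVertV k N), (∀ v ∈ g, isGrid v) →
      List.Chain' (UAdj (DVertE k N G)) (g ++ [.d j]) →
      ∀ v0, g.head? = some v0 → k * N ≤ g.length + levH v0 := by
  intro g
  induction g with
  | nil => intro _ _ v0 h; simp at h
  | cons v tail ih =>
    intro hg hchain v0 hv0
    have hv0' : v = v0 := by simpa using hv0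
    subst hv0'
    cases tail with
    | nil =>
      have hadj : UAdj (DVertE k N G) v (.d j) := by
        have := List.isChain_pair.mp (show List.Chain' _ [_, _] by simpa using hchain)
        exact this
      obtain ⟨i, q, ℓ, rfl, hi, hq⟩ := invD G hadj
      show k * N ≤ 1 + ((i : ℕ) * N + (q : ℕ))
      have h1 : ((i : ℕ) + 1) * N = k * N := by rw [hi]
      rw [add_mul, one_mul] at h1
      omega
    | cons w rest =>
      have hg' : ∀ x ∈ w :: rest, isGrid x := fun x hx => hg x (List.mem_cons_of_mem _ hx)
      have hchain' : List.Chain' (UAdj (DVertE k N G)) ((w :: rest) ++ [.d j]) := by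
        simp only [List.cons_append] at hchain ⊢
        exact hchain.tail
      have hadj : UAdj (DVertE k N G) v w := by
        simp only [List.cons_append] at hchain
        exact (List.isChain_cons_cons.mp hchain).1
      have hle := levH_le G (hg v (by simp)) (hg w (by simp)) hadj
      have hih := ih hg' hchain' w rfl
      simp only [List.length_cons] at hih ⊢
      omega

lemma chainV (i : Fin k) :
    ∀ g : List (DVertV k N), (∀ v ∈ g, isGrid v) →
      List.Chain' (UAdj (DVertE k N G)) (g ++ [.b i]) →
      ∀ (j : Fin k) (q ℓ : Fin N), g.head? = some (vNode G i j q ℓ) →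
      g.length + ((j : ℕ) * N + (ℓ : ℕ)) ≤ k * N →
      ∀ (j' : Fin k) (ℓ' : Fin N), (j : ℕ) * N + (ℓ : ℕ) ≤ (j' : ℕ) * N + (ℓ' : ℕ) →
      vNode G i j' q ℓ' ∈ g := by
  intro g
  induction g with
  | nil => intro _ _ _ _ _ h; simp at h
  | cons v tail ih =>
    intro hg hchain j q ℓ hhead hlen j' ℓ' hge
    have hv : v = vNode G i j q ℓ := by simpa using hhead
    subst hv
    cases tail with
    | nil =>
      have hadj : UAdj (DVertE k N G) (vNode G i j q ℓ) (.b i) := by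
        have := List.isChain_pair.mp (show List.Chain' _ [_, _] by simpa using hchain)
        exact this
      obtain ⟨jb, qb, ℓb, he, hjb, hlb⟩ := invB G hadj
      obtain ⟨-, e2, e3, e4⟩ := vNode_inj G he
      subst e2; subst e3; subst e4
      have h1 : ((j : ℕ) + 1) * N = k * N := by rw [hjb]
      have h2 : ((j' : ℕ) + 1) * N ≤ k * N := Nat.mul_le_mul (by omega) (le_refl N)
      rw [add_mul, one_mul] at h1 h2
      have hl' : (ℓ' : ℕ) < N := ℓ'.2
      have heq : (j : ℕ) * N + (ℓ : ℕ) = (j' : ℕ) * N + (ℓ' : ℕ) := by omega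
      obtain ⟨e5, e6⟩ := levInj ℓ.2 ℓ'.2 heq
      have e5' : j = j' := Fin.ext e5
      have e6' : ℓ = ℓ' := Fin.ext e6
      subst e5'; subst e6'
      simp
    | cons w rest =>
      have hg' : ∀ x ∈ w :: rest, isGrid x := fun x hx => hg x (List.mem_cons_of_mem _ hx)
      have hchain' : List.Chain' (UAdj (DVertE k N G)) ((w :: rest) ++ [.b i]) := by
        simp only [List.cons_append] at hchain ⊢
        exact hchain.tail
      have hadj : UAdj (DVertE k N G) (vNode G i j q ℓ) w := by
        simp only [List.cons_append] at hchain
        exact (List.isChain_cons_cons.mp hchain).1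
      have hwgrid : isGrid w := hg w (by simp)
      have hle : levV w ≤ (j : ℕ) * N + (ℓ : ℕ) + 1 := by
        have := levV_le G (hg _ (by simp)) hwgrid hadj
        rwa [levV_vNode] at this
      have hlow := lowerV G i (w :: rest) hg' hchain' w rfl
      have hlw : levV w = (j : ℕ) * N + (ℓ : ℕ) + 1 := by
        simp only [List.length_cons] at hlen hlow
        omega
      obtain ⟨i2, j2, q2, ℓ2, j3, ℓ3, hx, hy⟩ :=
        stepV G (hg _ (by simp)) hwgrid hadj (by rw [hlw, levV_vNode])
      obtain ⟨rfl, rfl, rfl, rfl⟩ := vNode_inj G hx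
      have hlev3 : (j3 : ℕ) * N + (ℓ3 : ℕ) = (j : ℕ) * N + (ℓ : ℕ) + 1 := by
        rw [← levV_vNode (G := G) i j3 q ℓ3, ← hy, hlw]
      rcases Nat.eq_or_lt_of_le hge with heq | hlt
      · obtain ⟨e1, e2⟩ := levInj ℓ.2 ℓ'.2 heq
        have e1' : j = j' := Fin.ext e1
        have e2' : ℓ = ℓ' := Fin.ext e2
        subst e1'; subst e2'
        simp
      · have hmem := ih hg' hchain' j3 q ℓ3 (by rw [hy]; rfl)
          (by simp only [List.length_cons] at hlen ⊢; omega) j' ℓ' (by omega)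
        exact List.mem_cons_of_mem _ hmem

lemma chainH (j : Fin k) :
    ∀ g : List (DVertV k N), (∀ v ∈ g, isGrid v) →
      List.Chain' (UAdj (DVertE k N G)) (g ++ [.d j]) →
      ∀ (i : Fin k) (q c : Fin N), g.head? = some (.gridH i j q c) →
      g.length + ((i : ℕ) * N + (q : ℕ)) ≤ k * N →
      ∀ (i' : Fin k) (q' : Fin N), (i : ℕ) * N + (q : ℕ) ≤ (i' : ℕ) * N + (q' : ℕ) →
      DVertV.gridH i' j q' c ∈ g := by
  intro g
  induction g with
  | nil => intro _ _ _ _ _ h; simp at h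
  | cons v tail ih =>
    intro hg hchain i q c hhead hlen i' q' hge
    have hv : v = .gridH i j q c := by simpa using hhead
    subst hv
    cases tail with
    | nil =>
      have hadj : UAdj (DVertE k N G) (.gridH i j q c) (.d j) := by
        have := List.isChain_pair.mp (show List.Chain' _ [_, _] by simpa using hchain)
        exact this
      obtain ⟨ib, qb, ℓb, he, hib, hqb⟩ := invD G hadj
      simp only [DVertV.gridH.injEq] at he
      obtain ⟨rfl, -, rfl, rfl⟩ := he
      have h1 : ((i : ℕ) + 1) * N = k * N := by rw [hib]
      have h2 : ((i' : ℕ) + 1) * N ≤ k * N := Nat.mul_le_mul (by omega) (le_refl N)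
      rw [add_mul, one_mul] at h1 h2
      have hq' : (q' : ℕ) < N := q'.2
      have heq : (i : ℕ) * N + (q : ℕ) = (i' : ℕ) * N + (q' : ℕ) := by omega
      obtain ⟨e5, e6⟩ := levInj q.2 q'.2 heq
      have e5' : i = i' := Fin.ext e5
      have e6' : q = q' := Fin.ext e6
      subst e5'; subst e6'
      simp
    | cons w rest =>
      have hg' : ∀ x ∈ w :: rest, isGrid x := fun x hx => hg x (List.mem_cons_of_mem _ hx)
      have hchain' : List.Chain' (UAdj (DVertE k N G)) ((w :: rest) ++ [.d j]) := by
        simp only [List.cons_append] at hchain ⊢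
        exact hchain.tail
      have hadj : UAdj (DVertE k N G) (.gridH i j q c) w := by
        simp only [List.cons_append] at hchain
        exact (List.isChain_cons_cons.mp hchain).1
      have hwgrid : isGrid w := hg w (by simp)
      have hle : levH w ≤ (i : ℕ) * N + (q : ℕ) + 1 := by
        have := levH_le G (hg _ (by simp)) hwgrid hadj
        exact this
      have hlow := lowerH G j (w :: rest) hg' hchain' w rfl
      have hlw : levH w = (i : ℕ) * N + (q : ℕ) + 1 := by
        simp only [List.length_cons] at hlen hlow
        omega
      obtain ⟨i2, i3, j2, q2, q3, ℓ2, hx, hy⟩ :=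
        stepH G (hg _ (by simp)) hwgrid hadj (by rw [hlw]; rfl)
      simp only [DVertV.gridH.injEq] at hx
      obtain ⟨rfl, rfl, rfl, rfl⟩ := hx
      have hlev3 : (i3 : ℕ) * N + (q3 : ℕ) = (i : ℕ) * N + (q : ℕ) + 1 := by
        have : levH w = (i3 : ℕ) * N + (q3 : ℕ) := by rw [hy]; rfl
        omega
      rcases Nat.eq_or_lt_of_le hge with heq | hlt
      · obtain ⟨e1, e2⟩ := levInj q.2 q'.2 heq
        have e1' : i = i' := Fin.ext e1
        have e2' : q = q' := Fin.ext e2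
        subst e1'; subst e2'
        simp
      · have hmem := ih hg' hchain' i3 q3 c (by rw [hy]; rfl)
          (by simp only [List.length_cons] at hlen ⊢; omega) i' q' (by omega)
        exact List.mem_cons_of_mem _ hmem


lemma succ_divmod_lt {N m : ℕ} (hc : m % N + 1 < N) :
    (m + 1) / N = m / N ∧ (m + 1) % N = m % N + 1 := by
  have h0 : 0 < N := by omega
  have h1 : m + 1 = (m % N + 1) + N * (m / N) := by
    have := Nat.div_add_mod m N; omega
  constructor
  · rw [h1, Nat.add_mul_div_left _ _ h0, Nat.div_eq_of_lt hc, Nat.zero_add]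
  · rw [h1, Nat.add_mul_mod_self_left, Nat.mod_eq_of_lt hc]

lemma succ_divmod_eq {N m : ℕ} (h0 : 0 < N) (hc : m % N + 1 = N) :
    (m + 1) / N = m / N + 1 ∧ (m + 1) % N = 0 := by
  have h1 : m + 1 = N * (m / N + 1) := by
    have := Nat.div_add_mod m N
    rw [Nat.mul_add, Nat.mul_one]
    omega
  constructor
  · rw [h1, Nat.mul_div_cancel_left _ h0]
  · rw [h1, Nat.mul_mod_right]

lemma last_divmod {k N : ℕ} (hk : 0 < k) (hN : 0 < N) :
    (k * N - 1) / N = k - 1 ∧ (k * N - 1) % N = N - 1 := by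
  obtain ⟨k', rfl⟩ : ∃ k', k = k' + 1 := ⟨k - 1, by omega⟩
  obtain ⟨N', rfl⟩ : ∃ N', N = N' + 1 := ⟨N - 1, by omega⟩
  have h1 : (k' + 1) * (N' + 1) - 1 = N' + (N' + 1) * k' := by
    have : (k' + 1) * (N' + 1) = N' + (N' + 1) * k' + 1 := by ring
    omega
  rw [h1]
  constructor
  · rw [Nat.add_mul_div_left _ _ (Nat.succ_pos _), Nat.div_eq_of_lt (by omega)]
    omega
  · rw [Nat.add_mul_mod_self_left, Nat.mod_eq_of_lt (by omega)]
    omega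

lemma div_lt_of_lt_mul' {k N t : ℕ} (hN : 0 < N) (ht : t < k * N) : t / N < k :=
  Nat.div_lt_iff_lt_mul hN |>.mpr ht





/-- the `t`-th grid vertex of the canonical `a_i ⇝ b_i` path with column `q` -/
def fV (hk : 0 < k) (hN : 0 < N) (i : Fin k) (q : Fin N) (t : ℕ) : DVertV k N :=
  vNode G i ⟨t / N % k, Nat.mod_lt _ hk⟩ q ⟨t % N, Nat.mod_lt _ hN⟩

/-- the `t`-th grid vertex of the canonical `c_j ⇝ d_j` path with row `c` -/
def fH (hk : 0 < k) (hN : 0 < N) (j : Fin k) (c : Fin N) (t : ℕ) : DVertV k N :=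
  .gridH ⟨t / N % k, Nat.mod_lt _ hk⟩ j ⟨t % N, Nat.mod_lt _ hN⟩ c

def canonV (hk : 0 < k) (hN : 0 < N) (i : Fin k) (q : Fin N) : List (DVertV k N) :=
  .a i :: ((List.range (k * N)).map (fV G hk hN i q) ++ [.b i])

def canonH (hk : 0 < k) (hN : 0 < N) (j : Fin k) (c : Fin N) : List (DVertV k N) :=
  .c j :: ((List.range (k * N)).map (fH hk hN j c) ++ [.d j])

lemma fV_lev (hk : 0 < k) (hN : 0 < N) (i : Fin k) (q : Fin N) {t : ℕ} (ht : t < k * N) :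
    levV (fV G hk hN i q t) = t := by
  unfold fV
  rw [levV_vNode]
  show t / N % k * N + t % N = t
  rw [Nat.mod_eq_of_lt (div_lt_of_lt_mul' hN ht)]
  conv_lhs => rw [Nat.mul_comm]
  exact Nat.div_add_mod t N

lemma fH_lev (hk : 0 < k) (hN : 0 < N) (j : Fin k) (c : Fin N) {t : ℕ} (ht : t < k * N) :
    levH (fH (k := k) hk hN j c t) = t := by
  show t / N % k * N + t % N = t
  rw [Nat.mod_eq_of_lt (div_lt_of_lt_mul' hN ht)]
  conv_lhs => rw [Nat.mul_comm]
  exact Nat.div_add_mod t N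

lemma canonV_path (hk : 0 < k) (hN : 0 < N) (i : Fin k) (q : Fin N) :
    IsPathList (UAdj (DVertE k N G)) (.a i) (.b i) (canonV G hk hN i q) ∧
      pathCost (costVert k N) (canonV G hk hN i q) = 5 * (k * N) := by
  have hkN : 0 < k * N := Nat.mul_pos hk hN
  obtain ⟨M, hM⟩ : ∃ M, k * N = M + 1 := ⟨k * N - 1, by omega⟩
  have hlastd := last_divmod hk hN
  refine ⟨⟨?_, ?_, rfl, ?_⟩, ?_⟩
  · -- chain
    unfold canonV
    rw [List.Chain', List.isChain_cons]
    constructor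
    · intro y hy
      have hL : (List.range (k * N)).map (fV G hk hN i q) =
          fV G hk hN i q 0 :: (List.range M).map (fV G hk hN i q ∘ Nat.succ) := by
        rw [hM, List.range_succ_eq_map, List.map_cons, List.map_map]
      rw [hL] at hy
      simp only [List.cons_append, List.head?_cons, Option.mem_def, Option.some.injEq] at hy
      subst hy
      left
      exact DVertE.srcA i _ q _ (by simp) (by simp)
    · rw [List.isChain_append]
      refine ⟨?_, List.isChain_singleton _, ?_⟩
      · rw [List.isChain_map, hM, List.isChain_range_succ]
        intro m hm
        have hmlt : m + 1 < k * N := by omega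
        by_cases hc : m % N + 1 < N
        · obtain ⟨hd, hmo⟩ := succ_divmod_lt hc
          left
          unfold fV
          have hj : (⟨(m+1) / N % k, Nat.mod_lt _ hk⟩ : Fin k) = ⟨m / N % k, Nat.mod_lt _ hk⟩ :=
            Fin.ext (by simp [hd])
          rw [hj]
          exact DVertE.up i _ q _ _ (by simp [hmo])
        · have hc' : m % N + 1 = N := by have := Nat.mod_lt m hN; omega
          obtain ⟨hd, hmo⟩ := succ_divmod_eq hN hc'
          left
          unfold fV
          refine DVertE.vmatch i _ _ q _ _ ?_ ?_ ?_
          · show (m+1) / N % k = m / N % k + 1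
            have hlt : (m+1) / N < k := div_lt_of_lt_mul' hN hmlt
            have hlt2 : m / N < k := div_lt_of_lt_mul' hN (by omega)
            rw [Nat.mod_eq_of_lt hlt, Nat.mod_eq_of_lt hlt2, hd]
          · show m % N + 1 = N
            exact hc'
          · show (m+1) % N = 0
            exact hmo
      · intro x hx y hy
        simp only [List.head?_cons, Option.mem_def, Option.some.injEq] at hy
        subst hy
        have hL : (List.range (k * N)).map (fV G hk hN i q) =
            (List.range M).map (fV G hk hN i q) ++ [fV G hk hN i q M] := by
          rw [hM, List.range_succ, List.map_append, List.map_cons, List.map_nil]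
        rw [hL, List.getLast?_concat, Option.mem_def, Option.some.injEq] at hx
        subst hx
        left
        unfold fV
        refine DVertE.snkB i _ q _ ?_ ?_
        · show M / N % k + 1 = k
          have : M = k * N - 1 := by omega
          rw [this, hlastd.1, Nat.mod_eq_of_lt (by omega)]
          omega
        · show M % N + 1 = N
          have : M = k * N - 1 := by omega
          rw [this, hlastd.2]
          omega
  · -- nodup
    unfold canonV
    rw [List.nodup_cons, List.mem_append]
    refine ⟨?_, ?_⟩
    · rintro (h | h)
      · obtain ⟨t, -, ht⟩ := List.mem_map.mp h
        exact a_ne_vNode G _ _ _ _ i ht.symm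
      · simp at h
    · rw [List.nodup_append]
      refine ⟨?_, List.nodup_singleton _, ?_⟩
      · refine List.Nodup.map_on ?_ List.nodup_range
        intro t ht t' ht' he
        rw [List.mem_range] at ht ht'
        have := fV_lev G hk hN i q ht
        rw [he, fV_lev G hk hN i q ht'] at this
        omega
      · intro x hx y hy hxy
        rw [← hxy] at hy
        obtain ⟨t, -, ht⟩ := List.mem_map.mp hx
        simp only [List.mem_singleton] at hy
        rw [← ht] at hy
        exact vNode_ne_b G _ _ _ _ i hy
  · -- last
    show (List.cons (DVertV.a i) ((List.range (k * N)).map (fV G hk hN i q) ++ [.b i])).getLast? = _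
    rw [show (DVertV.a i :: ((List.range (k * N)).map (fV G hk hN i q) ++ [DVertV.b i])) =
      ((DVertV.a i :: (List.range (k * N)).map (fV G hk hN i q)) ++ [DVertV.b i]) from rfl]
    rw [List.getLast?_concat]
  · -- cost
    unfold canonV pathCost
    rw [List.map_cons, List.map_append, List.map_map, List.sum_cons, List.sum_append]
    have h1 : (List.range (k * N)).map (costVert k N ∘ fV G hk hN i q) =
        (List.range (k * N)).map (fun _ => 1) := by
      apply List.map_congr_left
      intro t ht
      show costVert k N (fV G hk hN i q t) = 1
      unfold fV
      rcases vNode_cases G i _ q _ with h | h <;> rw [h] <;> rfl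
    rw [h1]
    simp only [List.map_const', List.sum_replicate, List.length_range, smul_eq_mul, mul_one,
      List.map_cons, List.map_nil, List.sum_cons, List.sum_nil]
    show 2 * k * N + (k * N + (2 * k * N + 0)) = 5 * (k * N)
    ring

lemma canonH_path (hk : 0 < k) (hN : 0 < N) (j : Fin k) (c : Fin N) :
    IsPathList (UAdj (DVertE k N G)) (.c j) (.d j) (canonH (k := k) hk hN j c) ∧
      pathCost (costVert k N) (canonH (k := k) hk hN j c) = 5 * (k * N) := by
  have hkN : 0 < k * N := Nat.mul_pos hk hN
  obtain ⟨M, hM⟩ : ∃ M, k * N = M + 1 := ⟨k * N - 1, by omega⟩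
  have hlastd := last_divmod hk hN
  refine ⟨⟨?_, ?_, rfl, ?_⟩, ?_⟩
  · -- chain
    unfold canonH
    rw [List.Chain', List.isChain_cons]
    constructor
    · intro y hy
      have hL : (List.range (k * N)).map (fH (k := k) hk hN j c) =
          fH (k := k) hk hN j c 0 :: (List.range M).map (fH (k := k) hk hN j c ∘ Nat.succ) := by
        rw [hM, List.range_succ_eq_map, List.map_cons, List.map_map]
      rw [hL] at hy
      simp only [List.cons_append, List.head?_cons, Option.mem_def, Option.some.injEq] at hy
      subst hy
      left
      exact DVertE.srcC _ j _ c (by simp) (by simp)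
    · rw [List.isChain_append]
      refine ⟨?_, List.isChain_singleton _, ?_⟩
      · rw [List.isChain_map, hM, List.isChain_range_succ]
        intro m hm
        have hmlt : m + 1 < k * N := by omega
        by_cases hc : m % N + 1 < N
        · obtain ⟨hd, hmo⟩ := succ_divmod_lt hc
          left
          unfold fH
          have hj : (⟨(m+1) / N % k, Nat.mod_lt _ hk⟩ : Fin k) = ⟨m / N % k, Nat.mod_lt _ hk⟩ :=
            Fin.ext (by simp [hd])
          rw [hj]
          exact DVertE.right _ j _ _ c (by simp [hmo])
        · have hc' : m % N + 1 = N := by have := Nat.mod_lt m hN; omega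
          obtain ⟨hd, hmo⟩ := succ_divmod_eq hN hc'
          left
          unfold fH
          refine DVertE.hmatch _ _ j _ _ c ?_ ?_ ?_
          · show (m+1) / N % k = m / N % k + 1
            have hlt : (m+1) / N < k := div_lt_of_lt_mul' hN hmlt
            have hlt2 : m / N < k := div_lt_of_lt_mul' hN (by omega)
            rw [Nat.mod_eq_of_lt hlt, Nat.mod_eq_of_lt hlt2, hd]
          · show m % N + 1 = N
            exact hc'
          · show (m+1) % N = 0
            exact hmo
      · intro x hx y hy
        simp only [List.head?_cons, Option.mem_def, Option.some.injEq] at hy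
        subst hy
        have hL : (List.range (k * N)).map (fH (k := k) hk hN j c) =
            (List.range M).map (fH (k := k) hk hN j c) ++ [fH (k := k) hk hN j c M] := by
          rw [hM, List.range_succ, List.map_append, List.map_cons, List.map_nil]
        rw [hL, List.getLast?_concat, Option.mem_def, Option.some.injEq] at hx
        subst hx
        left
        unfold fH
        refine DVertE.snkD _ j _ c ?_ ?_
        · show M / N % k + 1 = k
          have : M = k * N - 1 := by omega
          rw [this, hlastd.1, Nat.mod_eq_of_lt (by omega)]
          omega
        · show M % N + 1 = N
          have : M = k * N - 1 := by omega
          rw [this, hlastd.2]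
          omega
  · -- nodup
    unfold canonH
    rw [List.nodup_cons, List.mem_append]
    refine ⟨?_, ?_⟩
    · rintro (h | h)
      · obtain ⟨t, -, ht⟩ := List.mem_map.mp h
        exact absurd ht.symm (by simp [fH])
      · simp at h
    · rw [List.nodup_append]
      refine ⟨?_, List.nodup_singleton _, ?_⟩
      · refine List.Nodup.map_on ?_ List.nodup_range
        intro t ht t' ht' he
        rw [List.mem_range] at ht ht'
        have := fH_lev (k := k) hk hN j c ht
        rw [he, fH_lev (k := k) hk hN j c ht'] at this
        omega
      · intro x hx y hy hxy
        rw [← hxy] at hy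
        obtain ⟨t, -, ht⟩ := List.mem_map.mp hx
        simp only [List.mem_singleton] at hy
        rw [← ht] at hy
        exact absurd hy (by simp [fH])
  · -- last
    unfold canonH
    rw [show (DVertV.c j :: ((List.range (k * N)).map (fH (k := k) hk hN j c) ++ [DVertV.d j])) =
      ((DVertV.c j :: (List.range (k * N)).map (fH (k := k) hk hN j c)) ++ [DVertV.d j]) from rfl]
    rw [List.getLast?_concat]
  · -- cost
    unfold canonH pathCost
    rw [List.map_cons, List.map_append, List.map_map, List.sum_cons, List.sum_append]
    have h1 : (List.range (k * N)).map (costVert k N ∘ fH (k := k) hk hN j c) =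
        (List.range (k * N)).map (fun _ => 1) := by
      apply List.map_congr_left
      intro t ht
      rfl
    rw [h1]
    simp only [List.map_const', List.sum_replicate, List.length_range, smul_eq_mul, mul_one,
      List.map_cons, List.map_nil, List.sum_cons, List.sum_nil]
    show 2 * k * N + (k * N + (2 * k * N + 0)) = 5 * (k * N)
    ring


lemma cost_of_not_grid {v : DVertV k N} (h : ¬ isGrid v) : costVert k N v = 2 * k * N := by
  cases v <;> simp [isGrid] at h <;> rfl

lemma cost_of_grid {v : DVertV k N} (h : isGrid v) : costVert k N v = 1 := by
  cases v <;> simp [isGrid] at h <;> rfl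

lemma sum_grid {g : List (DVertV k N)} (h : ∀ v ∈ g, isGrid v) :
    (g.map (costVert k N)).sum = g.length := by
  induction g with
  | nil => rfl
  | cons v t ih =>
    rw [List.map_cons, List.sum_cons, cost_of_grid (h v (by simp)),
      ih (fun x hx => h x (List.mem_cons_of_mem _ hx)), List.length_cons]
    omega

lemma mainV (hk : 0 < k) (hN : 0 < N) (i : Fin k) (p : List (DVertV k N))
    (hp : IsPathList (UAdj (DVertE k N G)) (.a i) (.b i) p)
    (hcost : pathCost (costVert k N) p ≤ 5 * (k * N)) :
    ∃ q : Fin N, ∀ (j : Fin k) (ℓ : Fin N), vNode G i j q ℓ ∈ p := by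
  obtain ⟨hchain, hnodup, hhead, hlast⟩ := hp
  have hkN : 0 < k * N := Nat.mul_pos hk hN
  have h2kN : 2 * k * N = k * N + k * N := by ring
  obtain ⟨rest, rfl⟩ : ∃ rest, p = .a i :: rest := by
    cases p with
    | nil => simp at hhead
    | cons x l =>
      have hx : x = .a i := by simpa using hhead
      exact ⟨l, by rw [hx]⟩
  rcases rest.eq_nil_or_concat with rfl | ⟨g, x, rfl⟩
  · simp at hlast
  · simp only [List.concat_eq_append] at hcost hchain hnodup hhead hlast ⊢
    have hx : x = .b i := by
      rw [show (DVertV.a i :: (g ++ [x])) = ((DVertV.a i :: g) ++ [x]) from rfl,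
        List.getLast?_concat] at hlast
      simpa using hlast
    subst hx
    have hsum : pathCost (costVert k N) (DVertV.a i :: (g ++ [DVertV.b i]))
        = 2 * k * N + ((List.map (costVert k N) g).sum + (2 * k * N + 0)) := by
      unfold pathCost
      rw [List.map_cons, List.map_append, List.sum_cons, List.sum_append,
        List.map_cons, List.map_nil, List.sum_cons, List.sum_nil]
      rfl
    have hgrid : ∀ v ∈ g, isGrid v := by
      intro v hv
      by_contra hng
      have hcv := cost_of_not_grid (k := k) (N := N) hng
      have hmem : costVert k N v ∈ g.map (costVert k N) := List.mem_map_of_mem hv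
      have hle := List.single_le_sum (fun x _ => Nat.zero_le x) _ hmem
      rw [hcv] at hle
      rw [hsum] at hcost
      omega
    have hlen : g.length ≤ k * N := by
      have hs := sum_grid (k := k) hgrid
      rw [hsum, hs] at hcost
      omega
    have hgne : g ≠ [] := by
      rintro rfl
      have hadj : UAdj (DVertE k N G) (.a i) (.b i) := by
        have := List.isChain_pair.mp (show List.Chain' _ [_, _] by simpa using hchain)
        exact this
      obtain ⟨jj, qq, ll, heq, -, -⟩ := invA G hadj
      exact b_ne_vNode G _ _ _ _ _ heq
    obtain ⟨w, g', rfl⟩ : ∃ w g', g = w :: g' := by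
      cases g with
      | nil => exact absurd rfl hgne
      | cons w g' => exact ⟨w, g', rfl⟩
    have hchain' : List.Chain' (UAdj (DVertE k N G)) ((w :: g') ++ [.b i]) := by
      simp only [List.cons_append] at hchain ⊢
      exact hchain.tail
    have hadj : UAdj (DVertE k N G) (.a i) w := by
      simp only [List.cons_append] at hchain
      exact (List.isChain_cons_cons.mp hchain).1
    obtain ⟨j0, q, ℓ0, rfl, hj0, hl0⟩ := invA G hadj
    refine ⟨q, fun j ℓ => ?_⟩
    have hlen' : (vNode G i j0 q ℓ0 :: g').length + ((j0 : ℕ) * N + (ℓ0 : ℕ)) ≤ k * N := by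
      rw [hj0, hl0]
      simpa using hlen
    have hge : (j0 : ℕ) * N + (ℓ0 : ℕ) ≤ (j : ℕ) * N + (ℓ : ℕ) := by
      rw [hj0, hl0]; simp
    exact List.mem_cons_of_mem _ (List.mem_append_left _
      (chainV G i _ hgrid hchain' j0 q ℓ0 rfl hlen' j ℓ hge))

lemma mainH (hk : 0 < k) (hN : 0 < N) (j : Fin k) (p : List (DVertV k N))
    (hp : IsPathList (UAdj (DVertE k N G)) (.c j) (.d j) p)
    (hcost : pathCost (costVert k N) p ≤ 5 * (k * N)) :
    ∃ c : Fin N, ∀ (i : Fin k) (q : Fin N), DVertV.gridH i j q c ∈ p := by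
  obtain ⟨hchain, hnodup, hhead, hlast⟩ := hp
  have hkN : 0 < k * N := Nat.mul_pos hk hN
  have h2kN : 2 * k * N = k * N + k * N := by ring
  obtain ⟨rest, rfl⟩ : ∃ rest, p = .c j :: rest := by
    cases p with
    | nil => simp at hhead
    | cons x l =>
      have hx : x = .c j := by simpa using hhead
      exact ⟨l, by rw [hx]⟩
  rcases rest.eq_nil_or_concat with rfl | ⟨g, x, rfl⟩
  · simp at hlast
  · simp only [List.concat_eq_append] at hcost hchain hnodup hhead hlast ⊢
    have hx : x = .d j := by
      rw [show (DVertV.c j :: (g ++ [x])) = ((DVertV.c j :: g) ++ [x]) from rfl,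
        List.getLast?_concat] at hlast
      simpa using hlast
    subst hx
    have hsum : pathCost (costVert k N) (DVertV.c j :: (g ++ [DVertV.d j]))
        = 2 * k * N + ((List.map (costVert k N) g).sum + (2 * k * N + 0)) := by
      unfold pathCost
      rw [List.map_cons, List.map_append, List.sum_cons, List.sum_append,
        List.map_cons, List.map_nil, List.sum_cons, List.sum_nil]
      rfl
    have hgrid : ∀ v ∈ g, isGrid v := by
      intro v hv
      by_contra hng
      have hcv := cost_of_not_grid (k := k) (N := N) hng
      have hmem : costVert k N v ∈ g.map (costVert k N) := List.mem_map_of_mem hv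
      have hle := List.single_le_sum (fun x _ => Nat.zero_le x) _ hmem
      rw [hcv] at hle
      rw [hsum] at hcost
      omega
    have hlen : g.length ≤ k * N := by
      have hs := sum_grid (k := k) hgrid
      rw [hsum, hs] at hcost
      omega
    have hgne : g ≠ [] := by
      rintro rfl
      have hadj : UAdj (DVertE k N G) (.c j) (.d j) := by
        have := List.isChain_pair.mp (show List.Chain' _ [_, _] by simpa using hchain)
        exact this
      obtain ⟨ii, qq, ll, heq, -, -⟩ := invC G hadj
      simp at heq
    obtain ⟨w, g', rfl⟩ : ∃ w g', g = w :: g' := by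
      cases g with
      | nil => exact absurd rfl hgne
      | cons w g' => exact ⟨w, g', rfl⟩
    have hchain' : List.Chain' (UAdj (DVertE k N G)) ((w :: g') ++ [.d j]) := by
      simp only [List.cons_append] at hchain ⊢
      exact hchain.tail
    have hadj : UAdj (DVertE k N G) (.c j) w := by
      simp only [List.cons_append] at hchain
      exact (List.isChain_cons_cons.mp hchain).1
    obtain ⟨i0, q0, c, rfl, hi0, hq0⟩ := invC G hadj
    refine ⟨c, fun i q => ?_⟩
    have hlen' : (DVertV.gridH i0 j q0 c :: g').length + ((i0 : ℕ) * N + (q0 : ℕ)) ≤ k * N := by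
      rw [hi0, hq0]
      simpa using hlen
    have hge : (i0 : ℕ) * N + (q0 : ℕ) ≤ (i : ℕ) * N + (q : ℕ) := by
      rw [hi0, hq0]; simp
    exact List.mem_cons_of_mem _ (List.mem_append_left _
      (chainH G j _ hgrid hchain' i0 q0 c rfl hlen' i q hge))


end UVSound

/-- let `0 < ε ≤ 1/2`. If there is a collection `P` of pairwise
vertex-disjoint paths in `U_vertex` such that for at least `(1/2 + ε)·2k` of the `2k`
terminal pairs `(s,t) ∈ T` the collection contains a shortest (minimum-cost) `s`–`t`
path, then `G` contains a clique of size at least `2εk`. -/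
theorem UVert_soundness (N k : ℕ) (hN : 1 ≤ N) (hk : 1 ≤ k)
    (G : SimpleGraph (Fin N)) [DecidableRel G.Adj]
    (ε : ℝ) (hε0 : 0 < ε) (hε : ε ≤ 1 / 2)
    (SAT : Finset (Fin k ⊕ Fin k)) (P : Fin k ⊕ Fin k → List (DVertV k N))
    (hcard : (1 / 2 + ε) * (2 * k) ≤ (SAT.card : ℝ))
    (hshort : ∀ x ∈ SAT,
      IsShortestCostPath (DVertE k N G) (costVert k N) (vSrc x) (vDst x) (P x))
    (hdisj : ∀ x ∈ SAT, ∀ y ∈ SAT, x ≠ y → VertDisj (P x) (P y)) :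
    ∃ Z : Finset (Fin N),
      2 * ε * k ≤ (Z.card : ℝ) ∧ ∀ u ∈ Z, ∀ v ∈ Z, u ≠ v → G.Adj u v := by
  classical
  have hk' : 0 < k := hk
  have hN' : 0 < N := hN
  -- the row value of each horizontal (a_i ⇝ b_i) path
  have hrowE : ∀ i : Fin k, ∃ q : Fin N, Sum.inl i ∈ SAT →
      ∀ (j : Fin k) (ℓ : Fin N), vNode G i j q ℓ ∈ P (Sum.inl i) := by
    intro i
    by_cases hi : Sum.inl i ∈ SAT
    · obtain ⟨hp, hmin⟩ := hshort _ hi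
      have hcanon := UVSound.canonV_path G hk' hN' i ⟨0, hN'⟩
      have hcost : pathCost (costVert k N) (P (Sum.inl i)) ≤ 5 * (k * N) := by
        have h1 := hmin _ hcanon.1
        rwa [hcanon.2] at h1
      obtain ⟨q, hq⟩ := UVSound.mainV G hk' hN' i _ hp hcost
      exact ⟨q, fun _ => hq⟩
    · exact ⟨⟨0, hN'⟩, fun h => absurd h hi⟩
  choose r hr using hrowE
  -- the column value of each vertical (c_j ⇝ d_j) path
  have hcolE : ∀ j : Fin k, ∃ c : Fin N, Sum.inr j ∈ SAT →
      ∀ (i : Fin k) (q : Fin N), DVertV.gridH i j q c ∈ P (Sum.inr j) := by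
    intro j
    by_cases hj : Sum.inr j ∈ SAT
    · obtain ⟨hp, hmin⟩ := hshort _ hj
      have hcanon := UVSound.canonH_path G hk' hN' j ⟨0, hN'⟩
      have hcost : pathCost (costVert k N) (P (Sum.inr j)) ≤ 5 * (k * N) := by
        have h1 := hmin _ hcanon.1
        rwa [hcanon.2] at h1
      obtain ⟨c, hc⟩ := UVSound.mainH G hk' hN' j _ hp hcost
      exact ⟨c, fun _ => hc⟩
    · exact ⟨⟨0, hN'⟩, fun h => absurd h hj⟩
  choose cc hc using hcolE
  -- crossing paths force splits
  have hsplit : ∀ i j : Fin k, Sum.inl i ∈ SAT → Sum.inr j ∈ SAT →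
      Split G i j (r i) (cc j) := by
    intro i j hi hj
    by_contra hns
    have heq : vNode G i j (r i) (cc j) = DVertV.gridH i j (r i) (cc j) := by
      unfold vNode
      rw [if_neg hns]
    have m1 : vNode G i j (r i) (cc j) ∈ P (Sum.inl i) := hr i hi j (cc j)
    have m2 : DVertV.gridH i j (r i) (cc j) ∈ P (Sum.inr j) := hc j hj i (r i)
    exact (hdisj _ hi _ hj (by simp) _ m1) (by rw [heq]; exact m2)
  have hdiag : ∀ i : Fin k, Sum.inl i ∈ SAT → Sum.inr i ∈ SAT → r i = cc i := by
    intro i h1 h2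
    rcases hsplit i i h1 h2 with ⟨-, h⟩ | ⟨h, -⟩
    · exact h
    · exact absurd rfl h
  have hadjKey : ∀ i j : Fin k, i ≠ j → Sum.inl i ∈ SAT →
      Sum.inl j ∈ SAT → Sum.inr j ∈ SAT → G.Adj (r i) (r j) := by
    intro i j hne h1i h1j h2j
    rcases hsplit i j h1i h2j with ⟨h, -⟩ | ⟨-, h⟩
    · exact absurd h hne
    · rw [hdiag j h1j h2j]
      exact h
  -- the index set of pairs with both paths present
  set K : Finset (Fin k) :=
    Finset.univ.filter (fun i => Sum.inl i ∈ SAT ∧ Sum.inr i ∈ SAT) with hK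
  have hmemK : ∀ i : Fin k, i ∈ K ↔ (Sum.inl i ∈ SAT ∧ Sum.inr i ∈ SAT) := by
    intro i
    simp [hK]
  -- cardinality bound
  have hcardK : SAT.card ≤ K.card + k := by
    set Kl : Finset (Fin k) := Finset.univ.filter (fun i => Sum.inl i ∈ SAT) with hKl
    set Kr : Finset (Fin k) := Finset.univ.filter (fun i => Sum.inr i ∈ SAT) with hKr
    have hsub : SAT ⊆ Kl.image Sum.inl ∪ Kr.image Sum.inr := by
      intro x hx
      rcases x with i | j
      · exact Finset.mem_union_left _ (Finset.mem_image_of_mem _ (by simp [hKl, hx]))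
      · exact Finset.mem_union_right _ (Finset.mem_image_of_mem _ (by simp [hKr, hx]))
    have h1 : SAT.card ≤ Kl.card + Kr.card := by
      calc SAT.card ≤ (Kl.image Sum.inl ∪ Kr.image Sum.inr).card := Finset.card_le_card hsub
        _ ≤ (Kl.image Sum.inl).card + (Kr.image Sum.inr).card := Finset.card_union_le _ _
        _ ≤ Kl.card + Kr.card := by
            exact Nat.add_le_add (Finset.card_image_le) (Finset.card_image_le)
    have h2 : K = Kl ∩ Kr := by
      rw [hK, hKl, hKr, ← Finset.filter_and]
    have h3 : (Kl ∩ Kr).card + (Kl ∪ Kr).card = Kl.card + Kr.card :=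
      Finset.card_inter_add_card_union Kl Kr
    have h4 : (Kl ∪ Kr).card ≤ k := by
      calc (Kl ∪ Kr).card ≤ (Finset.univ : Finset (Fin k)).card := Finset.card_le_univ _
        _ = k := by simp
    rw [h2]
    omega
  -- the clique
  have hinj : Set.InjOn r ↑K := by
    intro i hi j hj he
    by_contra hne
    have h1 := (hmemK i).mp (Finset.mem_coe.mp hi)
    have h2 := (hmemK j).mp (Finset.mem_coe.mp hj)
    have hadj := hadjKey i j hne h1.1 h2.1 h2.2
    rw [he] at hadj
    exact G.loopless.irrefl _ hadj
  refine ⟨K.image r, ?_, ?_⟩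
  · rw [Finset.card_image_of_injOn hinj]
    have hc2 : (SAT.card : ℝ) ≤ (K.card : ℝ) + k := by exact_mod_cast hcardK
    nlinarith [hcard, hc2]
  · intro u hu v hv huv
    obtain ⟨i, hi, rfl⟩ := Finset.mem_image.mp hu
    obtain ⟨j, hj, rfl⟩ := Finset.mem_image.mp hv
    have hij : i ≠ j := fun h => huv (by rw [h])
    have h1 := (hmemK i).mp hi
    have h2 := (hmemK j).mp hj
    exact hadjKey i j hij h1.1 h2.1 h2.2
end
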